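/- For every reduced word i ∈ Σ_n, every • ∈ {A, D}, and every s with 0 ≤ s ≤ n(n−1)/2, there is an injection Ψ_•(i, s) : GP(i) ↪ GP(E_•(s)(i)), and its image is exactly the set of rigorous paths P of G(E_•(s)(i)) such that no switching node of P lies on the wire ℓ_•, where ℓ_D := ℓ_{n+1} and ℓ_A := ℓ_1 in the wiring diagram of E_•(s)(i). -/

import Mathlib

open scoped Classical

noncomputable section

namespace StringPolytope

/-! ### Words, reduced words, two-moves -/

/-- the simple transposition `s_a = (a, a+1)` acting on `ℕ` (wires are `1, …, n+1`). -/
def sTrans (a : ℕ) : Equiv.Perm ℕ := Equiv.swap a (a + 1)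

/-- product `s_{i₁} ⋯ s_{i_N}` of the simple transpositions of a word. -/
def wordProd (w : List ℕ) : Equiv.Perm ℕ := (w.map sTrans).prod

/-- the longest element `w₀` of the symmetric group on `{1, …, n+1}`,
sending `k ↦ n + 2 - k` there and fixing everything else. -/
def longestPerm (n : ℕ) : Equiv.Perm ℕ :=
  Function.Involutive.toPerm
    (fun k => if 1 ≤ k ∧ k ≤ n + 1 then n + 2 - k else k)
    (by intro k; dsimp only; split_ifs <;> omega)

/-- `w ∈ Σ_{n+1}`: a reduced word of the longest element of `S_{n+1}`,
i.e. a word over `[n] = {1,…,n}` of length `N = n(n+1)/2` whose product is `w₀`. -/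
def IsReduced (n : ℕ) (w : List ℕ) : Prop :=
  w.length = n * (n + 1) / 2 ∧ (∀ a ∈ w, 1 ≤ a ∧ a ≤ n) ∧ wordProd w = longestPerm n

/-- a single 2-move: exchange two adjacent letters `(a, b)` with `|a - b| > 1`. -/
def TwoMoveStep (w w' : List ℕ) : Prop :=
  ∃ u v a b, (a + 1 < b ∨ b + 1 < a) ∧ w = u ++ a :: b :: v ∧ w' = u ++ b :: a :: v

/-- 2-move equivalence of words. -/
def TwoMoveEquiv : List ℕ → List ℕ → Prop := Relation.ReflTransGen TwoMoveStep

/-- `A_n = (1, 2, …, n)`. -/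
def ascWord (n : ℕ) : List ℕ := (List.range n).map (· + 1)

/-- `D_n = (n, n-1, …, 1)`. -/
def descWord (n : ℕ) : List ℕ := (ascWord n).reverse

/-! ### The wiring diagram -/

/-- the letter `i_j` of `w` (1-based index `j`); the node `t_j` lies in column `i_j`. -/
def letterAt (w : List ℕ) (j : ℕ) : ℕ := w.getD (j - 1) 0

/-- `1 ≤ j ≤ N`: `t_j` is an actual node of the diagram. -/
def ValidNode (w : List ℕ) (j : ℕ) : Prop := 1 ≤ j ∧ j ≤ w.length

/-- the column-to-wire assignment just above node `t_j`
(at the top of the diagram, wire `k` is in column `k`). -/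
def stateAbove (w : List ℕ) (j : ℕ) : Equiv.Perm ℕ := wordProd (w.take (j - 1))

/-- the column-to-wire assignment just below node `t_j`. -/
def stateBelow (w : List ℕ) (j : ℕ) : Equiv.Perm ℕ := wordProd (w.take j)

/-- one of the two wires crossing at node `t_j` (the one leaving upward-left). -/
def wireX (w : List ℕ) (j : ℕ) : ℕ := stateAbove w j (letterAt w j)

/-- the other wire crossing at node `t_j` (the one leaving upward-right). -/
def wireY (w : List ℕ) (j : ℕ) : ℕ := stateAbove w j (letterAt w j + 1)

/-- the node `t_j` lies on the wire `ℓ_r`. -/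
def NodeOnWire (w : List ℕ) (j r : ℕ) : Prop := wireX w j = r ∨ wireY w j = r

/-- given one wire `r` at node `t_j`, the other wire crossing there. -/
def otherWire (w : List ℕ) (j r : ℕ) : ℕ := if wireX w j = r then wireY w j else wireX w j

/-- the column of wire `ℓ_r` at the height of node `t_j`. -/
def wireCol (w : List ℕ) (j r : ℕ) : ℕ := (stateBelow w j).symm r

/-- node `t_j` lies strictly below the wire `ℓ_{n+1}`
(which runs from the bottom-left corner to the top-right corner). -/
def BelowWireLast (n : ℕ) (w : List ℕ) (j : ℕ) : Prop :=
  wireCol w j (n + 1) < letterAt w j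

/-- node `t_j` lies strictly above the wire `ℓ_{n+1}`. -/
def AboveWireLast (n : ℕ) (w : List ℕ) (j : ℕ) : Prop :=
  letterAt w j + 1 < wireCol w j (n + 1)

/-- node `t_j` lies strictly below the wire `ℓ_1`
(which runs from the bottom-right corner to the top-left corner). -/
def BelowWireOne (w : List ℕ) (j : ℕ) : Prop :=
  letterAt w j + 1 < wireCol w j 1

/-- node `t_j` lies strictly above the wire `ℓ_1`. -/
def AboveWireOne (w : List ℕ) (j : ℕ) : Prop :=
  wireCol w j 1 < letterAt w j

/-! ### Rigorous (Gleizer–Postnikov) paths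

A path in `G(i, k)` is encoded by `k` together with the list of its switching
nodes, in order of travel.  Wires `ℓ_1, …, ℓ_k` are oriented upward
(decreasing node index) and the remaining wires downward. -/

/-- the (1-based indices of the) nodes lying on wire `ℓ_r`, in order of increasing index. -/
def nodesOn (w : List ℕ) (r : ℕ) : List ℕ :=
  ((List.range w.length).map (· + 1)).filter (fun j => decide (NodeOnWire w j r))

/-- nodes on wire `ℓ_r` strictly between the nodes `t_a` and `t_b`. -/
def segList (w : List ℕ) (r a b : ℕ) : List ℕ :=
  (nodesOn w r).filter (fun j => decide (min a b < j ∧ j < max a b))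

/-- nodes on wire `ℓ_r` strictly below the node `t_a`. -/
def tailList (w : List ℕ) (r a : ℕ) : List ℕ :=
  (nodesOn w r).filter (fun j => decide (a < j))

/-- a forbidden fragment of `G(i, k)`: the path passes straight through node `t_j`
travelling along the wire `ℓ_r`, where the other wire `ℓ_b` crossing there has the same
orientation as `ℓ_r` and (`r < b` if both upward, `r > b` if both downward). -/
def Forbidden (w : List ℕ) (k j r : ℕ) : Prop :=
  (r ≤ k ∧ otherWire w j r ≤ k ∧ r < otherWire w j r) ∨
  (k < r ∧ k < otherWire w j r ∧ otherWire w j r < r)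

/-- travelling in `G(i,k)`: currently on wire `ℓ_r` at node `t_a` (just switched there),
with future switching nodes `ms`; the travel is legal and ends at `L_{k+1}`. -/
def TravelOK (w : List ℕ) (k : ℕ) : ℕ → ℕ → List ℕ → Prop
  | r, a, [] => r = k + 1 ∧ ∀ j ∈ tailList w r a, ¬ Forbidden w k j r
  | r, a, m :: ms =>
      ValidNode w m ∧ NodeOnWire w m r ∧
      (if r ≤ k then m < a else a < m) ∧
      (∀ j ∈ segList w r a m, ¬ Forbidden w k j r) ∧
      TravelOK w k (otherWire w m r) m ms

/-- all nodes visited after the switch at node `t_a` onto wire `ℓ_r`. -/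
def visitTail (w : List ℕ) : ℕ → ℕ → List ℕ → List ℕ
  | r, a, [] => tailList w r a
  | r, a, m :: ms => segList w r a m ++ m :: visitTail w (otherWire w m r) m ms

/-- the list of all nodes visited by the path (switching nodes and straight passes). -/
def visitList (w : List ℕ) (k : ℕ) : List ℕ → List ℕ
  | [] => []
  | m :: ms => tailList w k m ++ m :: visitTail w (otherWire w m k) m ms

/-- `(k, ms)` encodes a rigorous (Gleizer–Postnikov) path in `G(i, k)`:
it starts at `L_k` going up the wire `ℓ_k`, switches wires exactly at the nodes
listed in `ms`, respects the orientation, ends at `L_{k+1}`, contains no forbidden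
fragment and passes through each node at most once. -/
def IsGPPath (n : ℕ) (w : List ℕ) (k : ℕ) (ms : List ℕ) : Prop :=
  1 ≤ k ∧ k ≤ n ∧
  (match ms with
   | [] => False
   | m :: rest =>
       ValidNode w m ∧ NodeOnWire w m k ∧
       (∀ j ∈ tailList w k m, ¬ Forbidden w k j k) ∧
       TravelOK w k (otherWire w m k) m rest) ∧
  (visitList w k ms).Nodup

/-- the set `GP(i)` of all rigorous paths of `G(i)`. -/
def GP (n : ℕ) (w : List ℕ) : Set (ℕ × List ℕ) := {p | IsGPPath n w p.1 p.2}

/-- `|GP(i)|`, the number of rigorous paths. -/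
def numGP (n : ℕ) (w : List ℕ) : ℕ := (GP n w).ncard

/-- the successive switches of a path: `(node, from-wire, to-wire)`. -/
def pathSwitches (w : List ℕ) : ℕ → List ℕ → List (ℕ × ℕ × ℕ)
  | _, [] => []
  | r, m :: ms => (m, r, otherWire w m r) :: pathSwitches w (otherWire w m r) ms

/-- the wire-expression of a path: the successive wires travelled. -/
def wireSeq (w : List ℕ) : ℕ → List ℕ → List ℕ
  | r, [] => [r]
  | r, m :: ms => r :: wireSeq w (otherWire w m r) ms

/-- the peaks of a path: switching nodes where the path switches from an
upward wire to a downward wire. -/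
def peaks (w : List ℕ) (k : ℕ) (ms : List ℕ) : List ℕ :=
  ((pathSwitches w k ms).filter (fun e => decide (e.2.1 ≤ k ∧ k < e.2.2))).map (·.1)

/-! ### String cone, `λ`-cone, string polytope -/

/-- `N = n(n+1)/2`, the number of nodes. -/
abbrev Dim (n : ℕ) : ℕ := n * (n + 1) / 2

/-- the coefficient `a_j` of `t_j` in the string inequality of the path `(k, ms)`:
`+1` if the path switches at `t_j` from `ℓ_r` to `ℓ_s` with `r < s`,
`-1` if it switches with `r > s`, and `0` otherwise. -/
def coeff (w : List ℕ) (k : ℕ) (ms : List ℕ) (j : ℕ) : ℝ :=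
  ((pathSwitches w k ms).map (fun e =>
    if e.1 = j then (if e.2.1 < e.2.2 then (1 : ℝ) else -1) else 0)).sum

/-- the (primitive inward normal) coefficient vector of the string inequality of a path. -/
def normalVec (n : ℕ) (w : List ℕ) (p : ℕ × List ℕ) : Fin (Dim n) → ℝ :=
  fun j => coeff w p.1 p.2 ((j : ℕ) + 1)

/-- the left-hand side `∑ a_j t_j` of the string inequality of the path `p`. -/
def stringIneq (n : ℕ) (w : List ℕ) (p : ℕ × List ℕ) (t : Fin (Dim n) → ℝ) : ℝ :=
  ∑ j : Fin (Dim n), normalVec n w p j * t j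

/-- the string cone `C_i ⊆ ℝ^N`. -/
def stringCone (n : ℕ) (w : List ℕ) : Set (Fin (Dim n) → ℝ) :=
  {t | ∀ p ∈ GP n w, 0 ≤ stringIneq n w p t}

/-- the polyhedron cut out by all string inequalities except the one of `p₀`. -/
def stringConeExcept (n : ℕ) (w : List ℕ) (p₀ : ℕ × List ℕ) : Set (Fin (Dim n) → ℝ) :=
  {t | ∀ p ∈ GP n w, p ≠ p₀ → 0 ≤ stringIneq n w p t}

/-- the coefficient `a_k` in the `λ`-inequality of node `t_j`:
`1` if `t_k` is one column left or right of `t_j`, `-2` if in the same column. -/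
def lamCoeff (w : List ℕ) (j k : ℕ) : ℝ :=
  if letterAt w k = letterAt w j then -2
  else if letterAt w k = letterAt w j + 1 ∨ letterAt w k + 1 = letterAt w j then 1
  else 0

/-- the `λ`-inequality of node `t_{j+1}`:
`t_j ≤ λ_{i_j} + ∑_{k > j} a_k t_k`. -/
def LamIneq (n : ℕ) (w : List ℕ) (lam : ℕ → ℤ) (j : Fin (Dim n)) (t : Fin (Dim n) → ℝ) : Prop :=
  t j ≤ (lam (letterAt w ((j : ℕ) + 1)) : ℝ) +
    ∑ k : Fin (Dim n),
      (if (j : ℕ) < (k : ℕ) then lamCoeff w ((j : ℕ) + 1) ((k : ℕ) + 1) else 0) * t k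

/-- the `λ`-cone `C_i^λ ⊆ ℝ^N`. -/
def lamCone (n : ℕ) (w : List ℕ) (lam : ℕ → ℤ) : Set (Fin (Dim n) → ℝ) :=
  {t | ∀ j, LamIneq n w lam j t}

/-- the polyhedron cut out by all `λ`-inequalities except the one of `j₀`. -/
def lamConeExcept (n : ℕ) (w : List ℕ) (lam : ℕ → ℤ) (j₀ : Fin (Dim n)) :
    Set (Fin (Dim n) → ℝ) :=
  {t | ∀ j, j ≠ j₀ → LamIneq n w lam j t}

/-- the string polytope `Δ_i(λ) = C_i ∩ C_i^λ`. -/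
def stringPolytope (n : ℕ) (w : List ℕ) (lam : ℕ → ℤ) : Set (Fin (Dim n) → ℝ) :=
  stringCone n w ∩ lamCone n w lam

/-- `λ = λ_1 ϖ_1 + ⋯ + λ_n ϖ_n` is a dominant integral weight: all `λ_j ≥ 0`. -/
def Dominant (n : ℕ) (lam : ℕ → ℤ) : Prop := ∀ j, 1 ≤ j → j ≤ n → 0 ≤ lam j

/-- `λ` is a regular dominant integral weight: all `λ_j > 0`. -/
def RegularDominant (n : ℕ) (lam : ℕ → ℤ) : Prop := ∀ j, 1 ≤ j → j ≤ n → 0 < lam j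

/-! ### Unimodular equivalence, Gelfand–Cetlin polytope, facets -/

/-- `P` and `Q` are unimodularly equivalent: `Q = M(P) + v` with `M ∈ GL(m, ℤ)`, `v ∈ ℤ^m`. -/
def UnimodEquiv {m : ℕ} (P Q : Set (Fin m → ℝ)) : Prop :=
  ∃ (M : Matrix (Fin m) (Fin m) ℤ) (v : Fin m → ℤ), IsUnit M.det ∧
    Q = (fun x i => (∑ j, (M i j : ℝ) * x j) + (v i : ℝ)) '' P

/-- the entry `x_{k,j}` (`1 ≤ j ≤ k ≤ n+1`) of a Gelfand–Cetlin pattern, where the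
top row is `x_{n+1,j} = λ_j + ⋯ + λ_n` and `x_{n+1,n+1} = 0`; the pair `(k, j)` is
encoded as the coordinate `k(k-1)/2 + (j-1)` of `ℝ^N`. -/
def gcX (n : ℕ) (lam : ℕ → ℤ) (x : Fin (Dim n) → ℝ) (k j : ℕ) : ℝ :=
  if k = n + 1 then (if j ≤ n then ∑ t ∈ Finset.Icc j n, (lam t : ℝ) else 0)
  else if h : k * (k - 1) / 2 + (j - 1) < Dim n then x ⟨k * (k - 1) / 2 + (j - 1), h⟩ else 0

/-- the Gelfand–Cetlin polytope `GC(λ) ⊆ ℝ^N`. -/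
def GCPolytope (n : ℕ) (lam : ℕ → ℤ) : Set (Fin (Dim n) → ℝ) :=
  {x | ∀ k j, 1 ≤ k → k ≤ n → 1 ≤ j → j ≤ k →
      gcX n lam x k j ≤ gcX n lam x (k + 1) j ∧
      gcX n lam x (k + 1) (j + 1) ≤ gcX n lam x k j}

/-- a face of a convex set: a convex extreme subset. -/
def IsFaceSet {m : ℕ} (S F : Set (Fin m → ℝ)) : Prop := IsExtreme ℝ S F ∧ Convex ℝ F

/-- a facet: a maximal proper face. -/
def IsFacet {m : ℕ} (S F : Set (Fin m → ℝ)) : Prop :=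
  IsFaceSet S F ∧ F ≠ S ∧ ∀ G, IsFaceSet S G → G ≠ S → F ⊆ G → F = G

/-- the number of facets. -/
def numFacets {m : ℕ} (S : Set (Fin m → ℝ)) : ℕ := {F | IsFacet S F}.ncard

/-- combinatorial equivalence: an inclusion-preserving bijection between face lattices. -/
def CombEquiv {m : ℕ} (S T : Set (Fin m → ℝ)) : Prop :=
  ∃ e : {F // IsFaceSet S F} ≃ {F // IsFaceSet T F},
    ∀ F G : {F // IsFaceSet S F}, F.1 ⊆ G.1 ↔ (e F).1 ⊆ (e G).1

/-! ### Indices, contractions and extensions -/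

/-- the `D`-index `ind_D(i) = |i_D^+|` for a decomposition `i ∼ i_D^- D_n i_D^+`
(independent of the decomposition). -/
def indD (n : ℕ) (w : List ℕ) : ℕ :=
  sInf {s | ∃ u v : List ℕ, v.length = s ∧ TwoMoveEquiv w (u ++ descWord n ++ v)}

/-- the `A`-index `ind_A(i) = |i_A^+|` for a decomposition `i ∼ i_A^- A_n i_A^+`. -/
def indA (n : ℕ) (w : List ℕ) : ℕ :=
  sInf {s | ∃ u v : List ℕ, v.length = s ∧ TwoMoveEquiv w (u ++ ascWord n ++ v)}

/-- `w'` is a `D`-contraction `C_D(w) = i_D^- (i_D^+ - 1)` of `w ∈ Σ_{n+1}`. -/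
def IsContractionD (n : ℕ) (w w' : List ℕ) : Prop :=
  ∃ u v : List ℕ, TwoMoveEquiv w (u ++ descWord n ++ v) ∧ w' = u ++ v.map (· - 1)

/-- `w'` is an `A`-contraction `C_A(w) = (i_A^- - 1) i_A^+` of `w ∈ Σ_{n+1}`. -/
def IsContractionA (n : ℕ) (w w' : List ℕ) : Prop :=
  ∃ u v : List ℕ, TwoMoveEquiv w (u ++ ascWord n ++ v) ∧ w' = u.map (· - 1) ++ v

/-- the `D`-extension `E_D(s) : Σ_{n+1} → Σ_{n+2}`,
`i = i^-(s) i^+(s) ↦ i^-(s) D_{n+1} (i^+(s) + 1)` where `|i^+(s)| = s`. -/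
def extD (n : ℕ) (s : ℕ) (w : List ℕ) : List ℕ :=
  w.take (w.length - s) ++ descWord (n + 1) ++ (w.drop (w.length - s)).map (· + 1)

/-- the `A`-extension `E_A(s) : Σ_{n+1} → Σ_{n+2}`,
`i = i^-(s) i^+(s) ↦ (i^-(s) + 1) A_{n+1} i^+(s)`. -/
def extA (n : ℕ) (s : ℕ) (w : List ℕ) : List ℕ :=
  (w.take (w.length - s)).map (· + 1) ++ ascWord (n + 1) ++ w.drop (w.length - s)

/-- there exists `(σ_1, …, σ_n) ∈ {A, D}^n` (here `true = D`, `false = A`) such that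
`ind_{σ_k}(C_{σ_{k+1}} ∘ ⋯ ∘ C_{σ_n}(i)) = 0` for all `k = n, …, 1`. -/
def SimplicialWord (n : ℕ) (w : List ℕ) : Prop :=
  ∃ (σ : ℕ → Bool) (c : ℕ → List ℕ), c n = w ∧
    ∀ k, 1 ≤ k → k ≤ n →
      (if σ k then IsContractionD k (c k) (c (k - 1)) ∧ indD k (c k) = 0
       else IsContractionA k (c k) (c (k - 1)) ∧ indA k (c k) = 0)


/-- the `D`-coindex `coind_D(i) = |i_D^-|`. -/
def coindD (n : ℕ) (w : List ℕ) : ℕ :=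
  sInf {s | ∃ u v : List ℕ, u.length = s ∧ TwoMoveEquiv w (u ++ descWord n ++ v)}

/-- the `A`-coindex `coind_A(i) = |i_A^-|`. -/
def coindA (n : ℕ) (w : List ℕ) : ℕ :=
  sInf {s | ∃ u v : List ℕ, u.length = s ∧ TwoMoveEquiv w (u ++ ascWord n ++ v)}

/-- the `a`-th (0-based) coordinate of a point of `ℝ^N`. -/
def entry (n : ℕ) (t : Fin (Dim n) → ℝ) (a : ℕ) : ℝ :=
  if h : a < Dim n then t ⟨a, h⟩ else 0

/-- the product of cones
`t_1 ≥ 0`, `t_2 ≥ t_3 ≥ 0`, …, `t_{N-n+1} ≥ ⋯ ≥ t_N ≥ 0` (in `ℝ^N`, 1-based: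
for `k = 1, …, n` the chain `t_{k(k-1)/2+1} ≥ ⋯ ≥ t_{k(k-1)/2+k} ≥ 0`). -/
def chainCone (n : ℕ) : Set (Fin (Dim n) → ℝ) :=
  {t | ∀ k j, 1 ≤ k → k ≤ n → 1 ≤ j → j ≤ k →
    (if j = k then 0 else entry n t (k * (k - 1) / 2 + j)) ≤
      entry n t (k * (k - 1) / 2 + (j - 1))}

/-! ### Auxiliary development for statement8 -/

section Aux

lemma wordProd_nil : wordProd [] = 1 := rfl

lemma wordProd_cons (a : ℕ) (w : List ℕ) : wordProd (a :: w) = sTrans a * wordProd w := by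
  simp [wordProd]

lemma wordProd_append (u v : List ℕ) : wordProd (u ++ v) = wordProd u * wordProd v := by
  simp [wordProd]

lemma sTrans_apply (a c : ℕ) :
    sTrans a c = if c = a then a + 1 else if c = a + 1 then a else c := by
  simp [sTrans, Equiv.swap_apply_def]

lemma wordProd_fix {m : ℕ} {w : List ℕ} (h : ∀ a ∈ w, 1 ≤ a ∧ a ≤ m) {c : ℕ}
    (hc : c = 0 ∨ m + 1 < c) : wordProd w c = c := by
  induction w with
  | nil => rfl
  | cons a w ih =>
      have ha := h a (by simp)
      have hw : ∀ a ∈ w, 1 ≤ a ∧ a ≤ m := fun b hb => h b (by simp [hb])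
      rw [wordProd_cons, Equiv.Perm.mul_apply, ih hw, sTrans_apply]
      split_ifs <;> omega

lemma wordProd_bdd {m : ℕ} {w : List ℕ} (h : ∀ a ∈ w, 1 ≤ a ∧ a ≤ m) {c : ℕ}
    (h1 : 1 ≤ c) (h2 : c ≤ m + 1) : 1 ≤ wordProd w c ∧ wordProd w c ≤ m + 1 := by
  induction w with
  | nil => simp [wordProd_nil]; omega
  | cons a w ih =>
      have ha := h a (by simp)
      have hw : ∀ a ∈ w, 1 ≤ a ∧ a ≤ m := fun b hb => h b (by simp [hb])
      have := ih hw
      rw [wordProd_cons, Equiv.Perm.mul_apply, sTrans_apply]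
      split_ifs <;> omega

lemma descWord_getD {n e : ℕ} (he : e < n) : (descWord n).getD e 0 = n - e := by
  have hlen : (descWord n).length = n := by simp [descWord, ascWord]
  rw [List.getD_eq_getElem _ _ (by omega)]
  simp [descWord, ascWord, List.getElem_reverse]
  omega

lemma ascWord_getD {n e : ℕ} (he : e < n) : (ascWord n).getD e 0 = e + 1 := by
  rw [List.getD_eq_getElem _ _ (by simp [ascWord]; omega)]
  simp [ascWord]

lemma descWord_length (n : ℕ) : (descWord n).length = n := by simp [descWord, ascWord]

lemma ascWord_length (n : ℕ) : (ascWord n).length = n := by simp [ascWord]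

lemma descWord_mem {n a : ℕ} (h : a ∈ descWord n) : 1 ≤ a ∧ a ≤ n := by
  simp [descWord, ascWord] at h
  omega

lemma ascWord_mem {n a : ℕ} (h : a ∈ ascWord n) : 1 ≤ a ∧ a ≤ n := by
  simp [ascWord] at h
  omega

lemma take_succ_getD {l : List ℕ} {e : ℕ} (he : e < l.length) :
    l.take (e + 1) = l.take e ++ [l.getD e 0] := by
  rw [List.getD_eq_getElem _ _ he]
  rw [List.take_succ, List.getElem?_eq_getElem he]
  rfl

lemma wordProd_descTake {n e : ℕ} (he : e ≤ n) : ∀ c,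
    wordProd ((descWord n).take e) c =
      if c = n + 1 - e then n + 1 else if n + 2 - e ≤ c ∧ c ≤ n + 1 then c - 1 else c := by
  induction e with
  | zero => intro c; simp [wordProd_nil]; split_ifs <;> omega
  | succ e ih =>
      intro c
      have he' : e < n := by omega
      rw [take_succ_getD (by rw [descWord_length]; omega), descWord_getD he',
        wordProd_append, Equiv.Perm.mul_apply]
      have hs : wordProd [n - e] (c) = sTrans (n - e) c := by
        simp [wordProd]
      rw [hs, sTrans_apply]
      have hne : n - e + 1 = n + 1 - e := by omega
      split_ifs with h1 h2 <;> rw [ih (by omega)] <;> split_ifs <;> omega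

lemma wordProd_ascTake {n e : ℕ} (he : e ≤ n) : ∀ c,
    wordProd ((ascWord n).take e) c =
      if c = e + 1 then 1 else if 1 ≤ c ∧ c ≤ e then c + 1 else c := by
  induction e with
  | zero => intro c; simp [wordProd_nil]; split_ifs <;> omega
  | succ e ih =>
      intro c
      have he' : e < n := by omega
      rw [take_succ_getD (by rw [ascWord_length]; omega), ascWord_getD he',
        wordProd_append, Equiv.Perm.mul_apply]
      have hs : wordProd [e + 1] (c) = sTrans (e + 1) c := by simp [wordProd]
      rw [hs, sTrans_apply]
      split_ifs with h1 h2 <;> rw [ih (by omega)] <;> split_ifs <;> omega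

lemma wordProd_desc (n c : ℕ) :
    wordProd (descWord n) c =
      if c = 1 then n + 1 else if 2 ≤ c ∧ c ≤ n + 1 then c - 1 else c := by
  have := wordProd_descTake (le_refl n) c
  rw [List.take_of_length_le (by rw [descWord_length])] at this
  rw [this]
  split_ifs <;> omega

lemma wordProd_asc (n c : ℕ) :
    wordProd (ascWord n) c =
      if c = n + 1 then 1 else if 1 ≤ c ∧ c ≤ n then c + 1 else c := by
  have := wordProd_ascTake (le_refl n) c
  rw [List.take_of_length_le (by rw [ascWord_length])] at this
  rw [this]

lemma conj_desc {m : ℕ} {u : List ℕ} (hu : ∀ a ∈ u, 1 ≤ a ∧ a ≤ m) :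
    wordProd u * wordProd (descWord (m + 1)) =
      wordProd (descWord (m + 1)) * wordProd (u.map (· + 1)) := by
  induction u with
  | nil => simp [wordProd_nil]
  | cons a u ih =>
      have ha := hu a (by simp)
      have hw : ∀ b ∈ u, 1 ≤ b ∧ b ≤ m := fun b hb => hu b (by simp [hb])
      have key : sTrans a * wordProd (descWord (m + 1)) =
          wordProd (descWord (m + 1)) * sTrans (a + 1) := by
        ext c
        simp only [Equiv.Perm.mul_apply]
        rw [wordProd_desc, wordProd_desc, sTrans_apply, sTrans_apply]
        split_ifs <;> omega
      rw [List.map_cons, wordProd_cons, wordProd_cons, mul_assoc, ih hw, ← mul_assoc,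
        key, mul_assoc]

lemma desc_mul_asc (m : ℕ) :
    wordProd (descWord (m + 1)) * wordProd (ascWord (m + 1)) = 1 := by
  ext c
  simp only [Equiv.Perm.mul_apply, Equiv.Perm.one_apply]
  rw [wordProd_asc, wordProd_desc]
  split_ifs <;> omega

end Aux

section Diagram

lemma mem_nodesOn {w : List ℕ} {r x : ℕ} :
    x ∈ nodesOn w r ↔ ValidNode w x ∧ NodeOnWire w x r := by
  unfold nodesOn
  rw [List.mem_filter]
  simp only [List.mem_map, List.mem_range, decide_eq_true_eq, ValidNode]
  constructor
  · rintro ⟨⟨a, ha, rfl⟩, h⟩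
    exact ⟨⟨by omega, by omega⟩, h⟩
  · rintro ⟨⟨h1, h2⟩, h⟩
    exact ⟨⟨x - 1, by omega, by omega⟩, h⟩

lemma nodesOn_nodup {w : List ℕ} {r : ℕ} : (nodesOn w r).Nodup := by
  apply List.Nodup.filter
  exact (List.nodup_range).map (fun a b h => by omega)

lemma mem_segList {w : List ℕ} {r a b x : ℕ} :
    x ∈ segList w r a b ↔
      ValidNode w x ∧ NodeOnWire w x r ∧ min a b < x ∧ x < max a b := by
  simp [segList, List.mem_filter, mem_nodesOn, and_assoc]

lemma mem_tailList {w : List ℕ} {r a x : ℕ} :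
    x ∈ tailList w r a ↔ ValidNode w x ∧ NodeOnWire w x r ∧ a < x := by
  simp [tailList, List.mem_filter, mem_nodesOn, and_assoc]

lemma segList_nodup {w : List ℕ} {r a b : ℕ} : (segList w r a b).Nodup :=
  nodesOn_nodup.filter _

lemma tailList_nodup {w : List ℕ} {r a : ℕ} : (tailList w r a).Nodup :=
  nodesOn_nodup.filter _

lemma count_nodup {l : List ℕ} (h : l.Nodup) (x : ℕ) :
    l.count x = if x ∈ l then 1 else 0 :=
  List.Nodup.count h

lemma letterAt_bdd {m : ℕ} {w : List ℕ} (hlet : ∀ a ∈ w, 1 ≤ a ∧ a ≤ m) {j : ℕ}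
    (hj : ValidNode w j) : 1 ≤ letterAt w j ∧ letterAt w j ≤ m := by
  obtain ⟨h1, h2⟩ := hj
  have : w.getD (j - 1) 0 ∈ w := by
    rw [List.getD_eq_getElem _ _ (by omega)]
    exact List.getElem_mem _
  exact hlet _ this

lemma stateAbove_bdd {m : ℕ} {w : List ℕ} (hlet : ∀ a ∈ w, 1 ≤ a ∧ a ≤ m) {j c : ℕ}
    (h1 : 1 ≤ c) (h2 : c ≤ m + 1) :
    1 ≤ stateAbove w j c ∧ stateAbove w j c ≤ m + 1 := by
  apply wordProd_bdd _ h1 h2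
  intro a ha
  exact hlet a (List.mem_of_mem_take ha)

lemma wireX_bdd {m : ℕ} {w : List ℕ} (hlet : ∀ a ∈ w, 1 ≤ a ∧ a ≤ m) {j : ℕ}
    (hj : ValidNode w j) : 1 ≤ wireX w j ∧ wireX w j ≤ m + 1 := by
  have := letterAt_bdd hlet hj
  exact stateAbove_bdd hlet (by omega) (by omega)

lemma wireY_bdd {m : ℕ} {w : List ℕ} (hlet : ∀ a ∈ w, 1 ≤ a ∧ a ≤ m) {j : ℕ}
    (hj : ValidNode w j) : 1 ≤ wireY w j ∧ wireY w j ≤ m + 1 := by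
  have := letterAt_bdd hlet hj
  exact stateAbove_bdd hlet (by omega) (by omega)

lemma wireX_ne_wireY {w : List ℕ} (j : ℕ) : wireX w j ≠ wireY w j := by
  intro h
  have := (stateAbove w j).injective h
  omega

lemma otherWire_cases (w : List ℕ) (j r : ℕ) :
    otherWire w j r = wireX w j ∨ otherWire w j r = wireY w j := by
  unfold otherWire; split_ifs <;> simp

lemma otherWire_bdd {m : ℕ} {w : List ℕ} (hlet : ∀ a ∈ w, 1 ≤ a ∧ a ≤ m) {j : ℕ}
    (hj : ValidNode w j) (r : ℕ) : 1 ≤ otherWire w j r ∧ otherWire w j r ≤ m + 1 := by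
  rcases otherWire_cases w j r with h | h <;> rw [h]
  · exact wireX_bdd hlet hj
  · exact wireY_bdd hlet hj

lemma otherWire_ne {w : List ℕ} {j r : ℕ} (h : NodeOnWire w j r) :
    otherWire w j r ≠ r := by
  have hxy := wireX_ne_wireY (w := w) j
  unfold otherWire
  rcases h with h | h <;> split_ifs with hX <;> omega

lemma nodeOnWire_otherWire (w : List ℕ) (j r : ℕ) :
    NodeOnWire w j (otherWire w j r) := by
  unfold otherWire NodeOnWire
  split_ifs <;> simp

lemma mem_visitTail_of_mem {w : List ℕ} {x : ℕ} :
    ∀ {ms r a}, x ∈ ms → x ∈ visitTail w r a ms := by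
  intro ms
  induction ms with
  | nil => simp
  | cons m ms ih =>
      intro r a hx
      rcases List.mem_cons.1 hx with rfl | hx
      · simp [visitTail]
      · simp only [visitTail, List.mem_append, List.mem_cons]
        exact Or.inr (Or.inr (ih hx))

lemma visitTail_valid {w : List ℕ} {k : ℕ} :
    ∀ {ms r a}, TravelOK w k r a ms → ∀ x ∈ visitTail w r a ms, ValidNode w x := by
  intro ms
  induction ms with
  | nil =>
      intro r a h x hx
      exact (mem_tailList.1 hx).1
  | cons m ms ih =>
      intro r a h x hx
      obtain ⟨hv, hon, hord, hseg, hrest⟩ := h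
      simp only [visitTail, List.mem_append, List.mem_cons] at hx
      rcases hx with hx | rfl | hx
      · exact (mem_segList.1 hx).1
      · exact hv
      · exact ih hrest x hx

lemma travel_last {w : List ℕ} {k : ℕ} :
    ∀ {ms r a}, TravelOK w k r a ms → r = k + 1 ∨ ∃ t ∈ ms, NodeOnWire w t (k + 1) := by
  intro ms
  induction ms with
  | nil => intro r a h; exact Or.inl h.1
  | cons m ms ih =>
      intro r a h
      obtain ⟨hv, hon, hord, hseg, hrest⟩ := h
      rcases ih hrest with h1 | ⟨t, ht, hon'⟩
      · refine Or.inr ⟨m, by simp, ?_⟩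
        rw [← h1]
        exact nodeOnWire_otherWire w m r
      · exact Or.inr ⟨t, by simp [ht], hon'⟩

end Diagram

/-! ### Abstract extension transfer -/

/-- relocation of node indices under insertion of a block of `B` letters at depth `L`. -/
def phim (L B x : ℕ) : ℕ := if x ≤ L then x else x + B

lemma phim_lt {L B x y : ℕ} : phim L B x < phim L B y ↔ x < y := by
  unfold phim; split_ifs <;> omega

lemma phim_inj {L B x y : ℕ} (h : phim L B x = phim L B y) : x = y := by
  unfold phim at h; split_ifs at h <;> omega

lemma phim_le_L {L B x : ℕ} : phim L B x ≤ L ↔ x ≤ L := by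
  unfold phim; split_ifs <;> omega

lemma phim_min {L B x y : ℕ} : min (phim L B x) (phim L B y) = phim L B (min x y) := by
  unfold phim; split_ifs <;> omega

lemma phim_max {L B x y : ℕ} : max (phim L B x) (phim L B y) = phim L B (max x y) := by
  unfold phim; split_ifs <;> omega

/-- number of straddling segments on the wire with block position `d`, in the
path tail starting at node `a` on wire `r` with remaining switches `ms`. -/
def strad (i : List ℕ) (L d : ℕ) (dOf : ℕ → ℕ) : ℕ → ℕ → List ℕ → ℕ
  | r, a, [] => if a ≤ L ∧ dOf r = d then 1 else 0
  | r, a, m :: ms =>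
      (if (min a m ≤ L ∧ L < max a m) ∧ dOf r = d then 1 else 0) +
        strad i L d dOf (otherWire i m r) m ms

lemma strad_nil {i : List ℕ} {L d : ℕ} {dOf : ℕ → ℕ} {r a : ℕ} :
    strad i L d dOf r a [] = if a ≤ L ∧ dOf r = d then 1 else 0 := rfl

lemma strad_cons {i : List ℕ} {L d : ℕ} {dOf : ℕ → ℕ} {r a n : ℕ} {ms : List ℕ} :
    strad i L d dOf r a (n :: ms) =
      (if (min a n ≤ L ∧ L < max a n) ∧ dOf r = d then 1 else 0) +
        strad i L d dOf (otherWire i n r) n ms := rfl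

/-- the data of an extension of the wiring diagram of `i` by a block of `m + 1`
letters at depth `L`, with wires renamed by `· + c` and new wire `ω`. -/
structure ExtData (m c ω L : ℕ) (i w' : List ℕ) (dOf : ℕ → ℕ) : Prop where
  hm : 1 ≤ m
  hL : L ≤ i.length
  hlet : ∀ a ∈ i, 1 ≤ a ∧ a ≤ m
  hlen' : w'.length = i.length + (m + 1)
  hc : c ≤ 1
  hNode : ∀ j r, ValidNode i j →
    (NodeOnWire w' (phim L (m + 1) j) (r + c) ↔ NodeOnWire i j r)
  hOther : ∀ j r, ValidNode i j →
    otherWire w' (phim L (m + 1) j) (r + c) = otherWire i j r + c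
  hwnot : ∀ j, ValidNode i j → ¬ NodeOnWire w' (phim L (m + 1) j) ω
  hdOf : ∀ r, 1 ≤ r → r ≤ m + 1 → 1 ≤ dOf r ∧ dOf r ≤ m + 1
  hdOfInj : ∀ r r', 1 ≤ r → r ≤ m + 1 → 1 ≤ r' → r' ≤ m + 1 → dOf r = dOf r' → r = r'
  hBlockOn : ∀ d r, 1 ≤ d → d ≤ m + 1 → 1 ≤ r → r ≤ m + 1 →
    (NodeOnWire w' (L + d) (r + c) ↔ d = dOf r)
  hBlockw : ∀ d, 1 ≤ d → d ≤ m + 1 → NodeOnWire w' (L + d) ω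
  hBlockFree : ∀ d k r, 1 ≤ d → d ≤ m + 1 → 1 ≤ k → k ≤ m → 1 ≤ r → r ≤ m + 1 →
    NodeOnWire w' (L + d) (r + c) → ¬ Forbidden w' (k + c) (L + d) (r + c)
  hrange : ∀ k' ms', IsGPPath (m + 1) w' k' ms' →
    (∀ t ∈ ms', ¬ NodeOnWire w' t ω) → ∃ k, 1 ≤ k ∧ k ≤ m ∧ k' = k + c

namespace ExtData

variable {m c ω L : ℕ} {i w' : List ℕ} {dOf : ℕ → ℕ} (E : ExtData m c ω L i w' dOf)

include E

lemma valid_phim {j : ℕ} : ValidNode w' (phim L (m + 1) j) ↔ ValidNode i j := by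
  have hL := E.hL
  have hl := E.hlen'
  unfold ValidNode phim
  split_ifs <;> omega

lemma valid_classify {x : ℕ} (hx : ValidNode w' x) :
    (∃ j, ValidNode i j ∧ x = phim L (m + 1) j) ∨
      (∃ d, 1 ≤ d ∧ d ≤ m + 1 ∧ x = L + d) := by
  have hL := E.hL
  have hl := E.hlen'
  obtain ⟨h1, h2⟩ := hx
  by_cases hc1 : x ≤ L
  · exact Or.inl ⟨x, ⟨h1, by omega⟩, by simp [phim, hc1]⟩
  by_cases hc2 : x ≤ L + (m + 1)
  · exact Or.inr ⟨x - L, by omega, by omega, by omega⟩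
  · refine Or.inl ⟨x - (m + 1), ⟨by omega, by omega⟩, ?_⟩
    unfold phim
    split_ifs <;> omega

lemma forb_transfer {j k r : ℕ} (hj : ValidNode i j) :
    Forbidden w' (k + c) (phim L (m + 1) j) (r + c) ↔ Forbidden i k j r := by
  unfold Forbidden
  rw [E.hOther j r hj]
  omega

lemma seg_mem {r a b x : ℕ} (hr1 : 1 ≤ r) (hr2 : r ≤ m + 1) :
    x ∈ segList w' (r + c) (phim L (m + 1) a) (phim L (m + 1) b) ↔
      ((∃ j, j ∈ segList i r a b ∧ x = phim L (m + 1) j) ∨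
        (x = L + dOf r ∧ min a b ≤ L ∧ L < max a b)) := by
  have hdr := E.hdOf r hr1 hr2
  have hLl := E.hL
  have hl' := E.hlen'
  constructor
  · intro hx
    obtain ⟨hv, hon, hlo, hhi⟩ := mem_segList.1 hx
    rw [phim_min] at hlo
    rw [phim_max] at hhi
    rcases E.valid_classify hv with ⟨j, hj, rfl⟩ | ⟨d, hd1, hd2, rfl⟩
    · refine Or.inl ⟨j, mem_segList.2 ⟨hj, ?_, ?_, ?_⟩, rfl⟩
      · -- NodeOnWire i j r
        by_cases honr : NodeOnWire i j r
        · exact honr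
        · exfalso
          -- x is on wire r + c; but then j is on wire r
          exact honr ((E.hNode j r hj).1 hon)
      · exact phim_lt.1 hlo
      · exact phim_lt.1 hhi
    · have hd : d = dOf r := (E.hBlockOn d r hd1 hd2 hr1 hr2).1 hon
      refine Or.inr ⟨by omega, ?_, ?_⟩
      · by_contra hcon
        have : ¬ min a b ≤ L := hcon
        have : L + (m + 1) < phim L (m + 1) (min a b) := by unfold phim; split_ifs <;> omega
        omega
      · by_contra hcon
        have : phim L (m + 1) (max a b) ≤ L := by unfold phim; split_ifs <;> omega
        omega
  · rintro (⟨j, hj, rfl⟩ | ⟨rfl, hmin, hmax⟩)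
    · obtain ⟨hv, hon, hlo, hhi⟩ := mem_segList.1 hj
      refine mem_segList.2 ⟨E.valid_phim.2 hv, (E.hNode j r hv).2 hon, ?_, ?_⟩
      · rw [phim_min]; exact phim_lt.2 hlo
      · rw [phim_max]; exact phim_lt.2 hhi
    · refine mem_segList.2 ⟨?_, (E.hBlockOn _ r (by omega) (by omega) hr1 hr2).2 rfl, ?_, ?_⟩
      · exact ⟨by omega, by omega⟩
      · rw [phim_min]; unfold phim; split_ifs <;> omega
      · rw [phim_max]; unfold phim; split_ifs <;> omega

lemma tail_mem {r a x : ℕ} (hr1 : 1 ≤ r) (hr2 : r ≤ m + 1) :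
    x ∈ tailList w' (r + c) (phim L (m + 1) a) ↔
      ((∃ j, j ∈ tailList i r a ∧ x = phim L (m + 1) j) ∨
        (x = L + dOf r ∧ a ≤ L)) := by
  have hdr := E.hdOf r hr1 hr2
  have hLl := E.hL
  have hl' := E.hlen'
  constructor
  · intro hx
    obtain ⟨hv, hon, hlo⟩ := mem_tailList.1 hx
    rcases E.valid_classify hv with ⟨j, hj, rfl⟩ | ⟨d, hd1, hd2, rfl⟩
    · exact Or.inl ⟨j, mem_tailList.2 ⟨hj, (E.hNode j r hj).1 hon, phim_lt.1 hlo⟩, rfl⟩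
    · have hd : d = dOf r := (E.hBlockOn d r hd1 hd2 hr1 hr2).1 hon
      refine Or.inr ⟨by omega, ?_⟩
      by_contra hcon
      have : L + (m + 1) < phim L (m + 1) a := by unfold phim; split_ifs <;> omega
      omega
  · rintro (⟨j, hj, rfl⟩ | ⟨rfl, hmin⟩)
    · obtain ⟨hv, hon, hlo⟩ := mem_tailList.1 hj
      exact mem_tailList.2 ⟨E.valid_phim.2 hv, (E.hNode j r hv).2 hon, phim_lt.2 hlo⟩
    · refine mem_tailList.2 ⟨⟨by omega, by omega⟩,
        (E.hBlockOn _ r (by omega) (by omega) hr1 hr2).2 rfl, ?_⟩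
      unfold phim; split_ifs <;> omega

lemma seg_forb {k r a b : ℕ} (hk1 : 1 ≤ k) (hk2 : k ≤ m) (hr1 : 1 ≤ r) (hr2 : r ≤ m + 1) :
    (∀ x ∈ segList w' (r + c) (phim L (m + 1) a) (phim L (m + 1) b),
        ¬ Forbidden w' (k + c) x (r + c)) ↔
      (∀ j ∈ segList i r a b, ¬ Forbidden i k j r) := by
  constructor
  · intro h j hj
    have hv : ValidNode i j := (mem_segList.1 hj).1
    rw [← E.forb_transfer hv]
    exact h _ ((E.seg_mem hr1 hr2).2 (Or.inl ⟨j, hj, rfl⟩))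
  · intro h x hx
    rcases (E.seg_mem hr1 hr2).1 hx with ⟨j, hj, rfl⟩ | ⟨rfl, _, _⟩
    · rw [E.forb_transfer (mem_segList.1 hj).1]
      exact h j hj
    · have hdr := E.hdOf r hr1 hr2
      exact E.hBlockFree _ k r (by omega) (by omega) hk1 hk2 hr1 hr2
        (mem_segList.1 hx).2.1

lemma tail_forb {k r a : ℕ} (hk1 : 1 ≤ k) (hk2 : k ≤ m) (hr1 : 1 ≤ r) (hr2 : r ≤ m + 1) :
    (∀ x ∈ tailList w' (r + c) (phim L (m + 1) a), ¬ Forbidden w' (k + c) x (r + c)) ↔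
      (∀ j ∈ tailList i r a, ¬ Forbidden i k j r) := by
  constructor
  · intro h j hj
    have hv : ValidNode i j := (mem_tailList.1 hj).1
    rw [← E.forb_transfer hv]
    exact h _ ((E.tail_mem hr1 hr2).2 (Or.inl ⟨j, hj, rfl⟩))
  · intro h x hx
    rcases (E.tail_mem hr1 hr2).1 hx with ⟨j, hj, rfl⟩ | ⟨rfl, _⟩
    · rw [E.forb_transfer (mem_tailList.1 hj).1]
      exact h j hj
    · have hdr := E.hdOf r hr1 hr2
      exact E.hBlockFree _ k r (by omega) (by omega) hk1 hk2 hr1 hr2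
        (mem_tailList.1 hx).2.1

end ExtData

namespace ExtData

variable {m c ω L : ℕ} {i w' : List ℕ} {dOf : ℕ → ℕ} (E : ExtData m c ω L i w' dOf)

include E

lemma travel_fwd {k : ℕ} (hk1 : 1 ≤ k) (hk2 : k ≤ m) :
    ∀ {ms r a}, 1 ≤ r → r ≤ m + 1 → ValidNode i a → TravelOK i k r a ms →
      TravelOK w' (k + c) (r + c) (phim L (m + 1) a) (ms.map (phim L (m + 1))) := by
  intro ms
  induction ms with
  | nil =>
      intro r a hr1 hr2 hva h
      obtain ⟨h1, h2⟩ := h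
      refine ⟨by omega, ?_⟩
      exact (E.tail_forb hk1 hk2 hr1 hr2).2 h2
  | cons n ms ih =>
      intro r a hr1 hr2 hva h
      obtain ⟨hv, hon, hord, hseg, hrest⟩ := h
      have hob := otherWire_bdd E.hlet hv r
      refine ⟨E.valid_phim.2 hv, (E.hNode n r hv).2 hon, ?_, ?_, ?_⟩
      · split_ifs with hc1
        · have : r ≤ k := by omega
          rw [if_pos this] at hord
          exact phim_lt.2 hord
        · have : ¬ r ≤ k := by omega
          rw [if_neg this] at hord
          exact phim_lt.2 hord
      · exact (E.seg_forb hk1 hk2 hr1 hr2).2 hseg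
      · rw [E.hOther n r hv]
        exact ih hob.1 hob.2 hv hrest

lemma travel_bwd {k : ℕ} (hk1 : 1 ≤ k) (hk2 : k ≤ m) :
    ∀ {ms r a}, 1 ≤ r → r ≤ m + 1 → ValidNode i a →
      TravelOK w' (k + c) (r + c) (phim L (m + 1) a) (ms.map (phim L (m + 1))) →
      TravelOK i k r a ms := by
  intro ms
  induction ms with
  | nil =>
      intro r a hr1 hr2 hva h
      obtain ⟨h1, h2⟩ := h
      refine ⟨by omega, ?_⟩
      exact (E.tail_forb hk1 hk2 hr1 hr2).1 h2
  | cons n ms ih =>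
      intro r a hr1 hr2 hva h
      obtain ⟨hv, hon, hord, hseg, hrest⟩ := h
      have hvn : ValidNode i n := E.valid_phim.1 hv
      have hob := otherWire_bdd E.hlet hvn r
      refine ⟨hvn, (E.hNode n r hvn).1 hon, ?_, ?_, ?_⟩
      · split_ifs with hc1
        · have : r + c ≤ k + c := by omega
          rw [if_pos this] at hord
          exact phim_lt.1 hord
        · have : ¬ r + c ≤ k + c := by omega
          rw [if_neg this] at hord
          exact phim_lt.1 hord
      · exact (E.seg_forb hk1 hk2 hr1 hr2).1 hseg
      · rw [E.hOther n r hvn] at hrest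
        exact ih hob.1 hob.2 hvn hrest

lemma phim_ne_block {x d : ℕ} (hd1 : 1 ≤ d) (hd2 : d ≤ m + 1) :
    phim L (m + 1) x ≠ L + d := by
  unfold phim
  split_ifs <;> omega

lemma count_tail_phi {r a x : ℕ} (hr1 : 1 ≤ r) (hr2 : r ≤ m + 1) :
    (tailList w' (r + c) (phim L (m + 1) a)).count (phim L (m + 1) x) =
      (tailList i r a).count x := by
  have hdr := E.hdOf r hr1 hr2
  have hmem : phim L (m + 1) x ∈ tailList w' (r + c) (phim L (m + 1) a) ↔
      x ∈ tailList i r a := by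
    rw [E.tail_mem hr1 hr2]
    constructor
    · rintro (⟨j, hj, heq⟩ | ⟨heq, _⟩)
      · rwa [phim_inj heq]
      · exact absurd heq (E.phim_ne_block (by omega) (by omega))
    · intro hx
      exact Or.inl ⟨x, hx, rfl⟩
  rw [count_nodup tailList_nodup, count_nodup tailList_nodup]
  simp [hmem]

lemma count_seg_phi {r a b x : ℕ} (hr1 : 1 ≤ r) (hr2 : r ≤ m + 1) :
    (segList w' (r + c) (phim L (m + 1) a) (phim L (m + 1) b)).count (phim L (m + 1) x) =
      (segList i r a b).count x := by
  have hdr := E.hdOf r hr1 hr2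
  have hmem : phim L (m + 1) x ∈ segList w' (r + c) (phim L (m + 1) a) (phim L (m + 1) b) ↔
      x ∈ segList i r a b := by
    rw [E.seg_mem hr1 hr2]
    constructor
    · rintro (⟨j, hj, heq⟩ | ⟨heq, _⟩)
      · rwa [phim_inj heq]
      · exact absurd heq (E.phim_ne_block (by omega) (by omega))
    · intro hx
      exact Or.inl ⟨x, hx, rfl⟩
  rw [count_nodup segList_nodup, count_nodup segList_nodup]
  simp [hmem]

lemma count_visitTail_phi {k : ℕ} :
    ∀ {ms r a}, 1 ≤ r → r ≤ m + 1 → TravelOK i k r a ms → ∀ x,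
      (visitTail w' (r + c) (phim L (m + 1) a) (ms.map (phim L (m + 1)))).count
          (phim L (m + 1) x) =
        (visitTail i r a ms).count x := by
  intro ms
  induction ms with
  | nil =>
      intro r a hr1 hr2 h x
      exact E.count_tail_phi hr1 hr2
  | cons n ms ih =>
      intro r a hr1 hr2 h x
      obtain ⟨hv, hon, hord, hseg, hrest⟩ := h
      have hob := otherWire_bdd E.hlet hv r
      simp only [List.map_cons, visitTail, List.count_append, List.count_cons]
      rw [E.hOther n r hv]
      have h1 := E.count_seg_phi (a := a) (b := n) (x := x) hr1 hr2
      have h2 := ih hob.1 hob.2 hrest x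
      have h3 : (phim L (m + 1) n = phim L (m + 1) x) ↔ (n = x) :=
        ⟨fun hh => phim_inj hh, fun hh => by rw [hh]⟩
      simp only [beq_iff_eq]
      rw [h1, h2, if_congr h3 rfl rfl]

lemma count_visitTail_block {k : ℕ} :
    ∀ {ms r a}, 1 ≤ r → r ≤ m + 1 → TravelOK i k r a ms → ∀ d, 1 ≤ d → d ≤ m + 1 →
      (visitTail w' (r + c) (phim L (m + 1) a) (ms.map (phim L (m + 1)))).count (L + d) =
        strad i L d dOf r a ms := by
  intro ms
  induction ms with
  | nil =>
      intro r a hr1 hr2 h d hd1 hd2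
      have hdr := E.hdOf r hr1 hr2
      have hmem : (L + d) ∈ tailList w' (r + c) (phim L (m + 1) a) ↔
          (a ≤ L ∧ dOf r = d) := by
        rw [E.tail_mem hr1 hr2]
        constructor
        · rintro (⟨j, hj, heq⟩ | ⟨heq, hle⟩)
          · exact absurd heq.symm (E.phim_ne_block hd1 hd2)
          · exact ⟨hle, by omega⟩
        · rintro ⟨hle, heq⟩
          exact Or.inr ⟨by omega, hle⟩
      show (tailList w' (r + c) (phim L (m + 1) a)).count (L + d) = _
      rw [count_nodup tailList_nodup, strad_nil, if_congr hmem rfl rfl]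
  | cons n ms ih =>
      intro r a hr1 hr2 h d hd1 hd2
      obtain ⟨hv, hon, hord, hseg, hrest⟩ := h
      have hdr := E.hdOf r hr1 hr2
      have hob := otherWire_bdd E.hlet hv r
      simp only [List.map_cons, visitTail, List.count_append, List.count_cons]
      rw [E.hOther n r hv]
      have h2 := ih hob.1 hob.2 hrest d hd1 hd2
      have hmem : (L + d) ∈ segList w' (r + c) (phim L (m + 1) a) (phim L (m + 1) n) ↔
          ((min a n ≤ L ∧ L < max a n) ∧ dOf r = d) := by
        rw [E.seg_mem hr1 hr2]
        constructor
        · rintro (⟨j, hj, heq⟩ | ⟨heq, hle, hlt⟩)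
          · exact absurd heq.symm (E.phim_ne_block hd1 hd2)
          · exact ⟨⟨hle, hlt⟩, by omega⟩
        · rintro ⟨⟨hle, hlt⟩, heq⟩
          exact Or.inr ⟨by omega, hle, hlt⟩
      rw [count_nodup segList_nodup]
      simp only [beq_iff_eq]
      rw [if_neg (E.phim_ne_block hd1 hd2), h2, strad_cons, if_congr hmem rfl rfl]
      omega

end ExtData

namespace ExtData

variable {m c ω L : ℕ} {i w' : List ℕ} {dOf : ℕ → ℕ} (E : ExtData m c ω L i w' dOf)

include E

lemma strad_witness {k d rs : ℕ} (hrs1 : 1 ≤ rs) (hrs2 : rs ≤ m + 1) (hds : dOf rs = d) :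
    ∀ {ms r a}, 1 ≤ r → r ≤ m + 1 → ValidNode i a → NodeOnWire i a r →
      TravelOK i k r a ms → 1 ≤ strad i L d dOf r a ms →
      ∃ lo hi, lo ≤ L ∧ L < hi ∧ ValidNode i lo ∧ NodeOnWire i lo rs ∧
        ((lo = a ∧ r = rs) ∨ lo ∈ visitTail i r a ms) ∧
        (∀ x, ValidNode i x → NodeOnWire i x rs → lo < x → x < hi →
          x ∈ visitTail i r a ms) := by
  intro ms
  induction ms with
  | nil =>
      intro r a hr1 hr2 hva hoa hT hS
      rw [strad_nil] at hS
      have hcond : a ≤ L ∧ dOf r = d := by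
        by_contra hcon
        rw [if_neg hcon] at hS
        omega
      have hrrs : r = rs := E.hdOfInj r rs hr1 hr2 hrs1 hrs2 (by omega)
      refine ⟨a, i.length + 1, hcond.1, by have := E.hL; omega, hva, hrrs ▸ hoa,
        Or.inl ⟨rfl, hrrs⟩, ?_⟩
      intro x hvx honx hlt _
      show x ∈ tailList i r a
      exact mem_tailList.2 ⟨hvx, hrrs ▸ honx, hlt⟩
  | cons n ms ih =>
      intro r a hr1 hr2 hva hoa hT hS
      obtain ⟨hv, hon, hord, hseg, hrest⟩ := hT
      have hob := otherWire_bdd E.hlet hv r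
      rw [strad_cons] at hS
      by_cases hc1 : (min a n ≤ L ∧ L < max a n) ∧ dOf r = d
      · have hrrs : r = rs := E.hdOfInj r rs hr1 hr2 hrs1 hrs2 (by omega)
        refine ⟨min a n, max a n, hc1.1.1, hc1.1.2, ?_, ?_, ?_, ?_⟩
        · rcases min_choice a n with hmin | hmin <;> rw [hmin]
          · exact hva
          · exact hv
        · rcases min_choice a n with hmin | hmin <;> rw [hmin, ← hrrs]
          · exact hoa
          · exact hon
        · rcases min_choice a n with hmin | hmin <;> rw [hmin]
          · exact Or.inl ⟨rfl, hrrs⟩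
          · refine Or.inr ?_
            show n ∈ segList i r a n ++ n :: visitTail i (otherWire i n r) n ms
            simp
        · intro x hvx honx hlt hlt'
          show x ∈ segList i r a n ++ n :: visitTail i (otherWire i n r) n ms
          rw [List.mem_append]
          exact Or.inl (mem_segList.2 ⟨hvx, hrrs ▸ honx, hlt, hlt'⟩)
      · rw [if_neg hc1] at hS
        obtain ⟨lo, hi, hl1, hl2, hl3, hl4, hl5, hl6⟩ :=
          ih hob.1 hob.2 hv (nodeOnWire_otherWire i n r) hrest (by omega)
        refine ⟨lo, hi, hl1, hl2, hl3, hl4, ?_, ?_⟩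
        · show _ ∨ lo ∈ segList i r a n ++ n :: visitTail i (otherWire i n r) n ms
          rcases hl5 with ⟨rfl, _⟩ | hmem
          · refine Or.inr ?_
            simp
          · refine Or.inr ?_
            rw [List.mem_append, List.mem_cons]
            exact Or.inr (Or.inr hmem)
        · intro x hvx honx hlt hlt'
          show x ∈ segList i r a n ++ n :: visitTail i (otherWire i n r) n ms
          rw [List.mem_append, List.mem_cons]
          exact Or.inr (Or.inr (hl6 x hvx honx hlt hlt'))

lemma strad_le_one {k d : ℕ} :
    ∀ {ms r a}, 1 ≤ r → r ≤ m + 1 → ValidNode i a → NodeOnWire i a r →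
      TravelOK i k r a ms → (a :: visitTail i r a ms).Nodup →
      strad i L d dOf r a ms ≤ 1 := by
  intro ms
  induction ms with
  | nil =>
      intro r a _ _ _ _ _ _
      rw [strad_nil]
      split_ifs <;> omega
  | cons n ms ih =>
      intro r a hr1 hr2 hva hoa hT hND
      obtain ⟨hv, hon, hord, hseg, hrest⟩ := hT
      have hob := otherWire_bdd E.hlet hv r
      have hVeq : visitTail i r a (n :: ms) =
          segList i r a n ++ n :: visitTail i (otherWire i n r) n ms := rfl
      have hND1 : (segList i r a n ++ n :: visitTail i (otherWire i n r) n ms).Nodup := by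
        have := hND.of_cons
        rwa [hVeq] at this
      have hND2 : (n :: visitTail i (otherWire i n r) n ms).Nodup :=
        hND1.sublist (List.sublist_append_right _ _)
      rw [strad_cons]
      by_cases hc1 : (min a n ≤ L ∧ L < max a n) ∧ dOf r = d
      · rw [if_pos hc1]
        have hrrs : r = r := rfl
        have hzero : strad i L d dOf (otherWire i n r) n ms = 0 := by
          by_contra hcon
          obtain ⟨lo, hi, hl1, hl2, hl3, hl4, hl5, hl6⟩ :=
            E.strad_witness (rs := r) hr1 hr2 hc1.2 hob.1 hob.2 hv
              (nodeOnWire_otherWire i n r) hrest (by omega)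
          have hr2ne : otherWire i n r ≠ r := otherWire_ne hon
          have hloV : lo ∈ visitTail i (otherWire i n r) n ms := by
            rcases hl5 with ⟨_, hbad⟩ | h
            · exact absurd hbad hr2ne
            · exact h
          have hdisj := (List.nodup_append.1 hND1).2.2
          rcases lt_trichotomy (min a n) lo with hcmp | hcmp | hcmp
          · -- lo strictly inside first segment
            have hseg' : lo ∈ segList i r a n :=
              mem_segList.2 ⟨hl3, hl4, hcmp, by omega⟩
            exact hdisj _ hseg' _ (List.mem_cons.2 (Or.inr hloV)) rfl
          · -- lo equals an endpoint of first segment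
            rcases min_choice a n with hmin | hmin
            · have ha : a = lo := by rw [hmin] at hcmp; exact hcmp
              have : a ∈ visitTail i r a (n :: ms) := by
                rw [hVeq, List.mem_append, List.mem_cons]
                exact Or.inr (Or.inr (ha ▸ hloV))
              exact (List.nodup_cons.1 hND).1 this
            · have hn : n = lo := by rw [hmin] at hcmp; exact hcmp
              exact (List.nodup_cons.1 hND2).1 (hn ▸ hloV)
          · -- endpoint of the first segment is inside the second
            have hminmem : min a n ∈ visitTail i (otherWire i n r) n ms := by
              apply hl6 (min a n) _ _ hcmp (by omega)
              · rcases min_choice a n with hmin | hmin <;> rw [hmin]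
                · exact hva
                · exact hv
              · rcases min_choice a n with hmin | hmin <;> rw [hmin]
                · exact hoa
                · exact hon
            rcases min_choice a n with hmin | hmin
            · rw [hmin] at hminmem
              have : a ∈ visitTail i r a (n :: ms) := by
                rw [hVeq, List.mem_append, List.mem_cons]
                exact Or.inr (Or.inr hminmem)
              exact (List.nodup_cons.1 hND).1 this
            · rw [hmin] at hminmem
              exact (List.nodup_cons.1 hND2).1 hminmem
        omega
      · rw [if_neg hc1]
        have := ih hob.1 hob.2 hv (nodeOnWire_otherWire i n r) hrest hND2
        omega

end ExtData

lemma travel_ms_valid {w : List ℕ} {k : ℕ} :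
    ∀ {ms r a}, TravelOK w k r a ms → ∀ x ∈ ms, ValidNode w x := by
  intro ms
  induction ms with
  | nil => simp
  | cons n ms ih =>
      intro r a h x hx
      obtain ⟨hv, _, _, _, hrest⟩ := h
      rcases List.mem_cons.1 hx with rfl | hx
      · exact hv
      · exact ih hrest x hx

lemma gp_ms_valid {n : ℕ} {w : List ℕ} {k : ℕ} {ms : List ℕ} (h : IsGPPath n w k ms) :
    ∀ x ∈ ms, ValidNode w x := by
  obtain ⟨_, _, hmain, _⟩ := h
  cases ms with
  | nil => simp
  | cons a ms =>
      obtain ⟨hv, _, _, ht⟩ := hmain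
      intro x hx
      rcases List.mem_cons.1 hx with rfl | hx
      · exact hv
      · exact travel_ms_valid ht x hx

namespace ExtData

variable {m c ω L : ℕ} {i w' : List ℕ} {dOf : ℕ → ℕ} (E : ExtData m c ω L i w' dOf)

include E

lemma count_visitList_phi {k n : ℕ} {ms : List ℕ} (hk1 : 1 ≤ k) (hk2 : k ≤ m)
    (hv : ValidNode i n) (ht : TravelOK i k (otherWire i n k) n ms) (x : ℕ) :
    (visitList w' (k + c) ((n :: ms).map (phim L (m + 1)))).count (phim L (m + 1) x) =
      (visitList i k (n :: ms)).count x := by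
  have hob := otherWire_bdd E.hlet hv k
  simp only [List.map_cons, visitList, List.count_append, List.count_cons, beq_iff_eq]
  rw [E.hOther n k hv, E.count_tail_phi hk1 (by omega),
    E.count_visitTail_phi hob.1 hob.2 ht x,
    if_congr ⟨fun h => phim_inj h, fun h => by rw [h]⟩ rfl rfl]

lemma count_visitList_block {k n : ℕ} {ms : List ℕ} (hk1 : 1 ≤ k) (hk2 : k ≤ m)
    (hv : ValidNode i n) (ht : TravelOK i k (otherWire i n k) n ms)
    {d : ℕ} (hd1 : 1 ≤ d) (hd2 : d ≤ m + 1) :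
    (visitList w' (k + c) ((n :: ms).map (phim L (m + 1)))).count (L + d) =
      (if n ≤ L ∧ dOf k = d then 1 else 0) +
        strad i L d dOf (otherWire i n k) n ms := by
  have hob := otherWire_bdd E.hlet hv k
  have hdk := E.hdOf k hk1 (by omega)
  simp only [List.map_cons, visitList, List.count_append, List.count_cons, beq_iff_eq]
  rw [E.hOther n k hv, E.count_visitTail_block hob.1 hob.2 ht d hd1 hd2]
  have hmem : (L + d) ∈ tailList w' (k + c) (phim L (m + 1) n) ↔ (n ≤ L ∧ dOf k = d) := by
    rw [E.tail_mem hk1 (by omega)]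
    constructor
    · rintro (⟨j, hj, heq⟩ | ⟨heq, hle⟩)
      · exact absurd heq.symm (E.phim_ne_block hd1 hd2)
      · exact ⟨hle, by omega⟩
    · rintro ⟨hle, heq⟩
      exact Or.inr ⟨by omega, hle⟩
  rw [count_nodup tailList_nodup, if_congr hmem rfl rfl,
    if_neg (E.phim_ne_block hd1 hd2)]
  omega

lemma visitList_block_le_one {k n : ℕ} {ms : List ℕ} (hk1 : 1 ≤ k) (hk2 : k ≤ m)
    (hv : ValidNode i n) (hon : NodeOnWire i n k)
    (ht : TravelOK i k (otherWire i n k) n ms)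
    (hnd : (visitList i k (n :: ms)).Nodup) {d : ℕ} :
    (if n ≤ L ∧ dOf k = d then 1 else 0) +
      strad i L d dOf (otherWire i n k) n ms ≤ 1 := by
  have hob := otherWire_bdd E.hlet hv k
  have hVeq : visitList i k (n :: ms) =
      tailList i k n ++ n :: visitTail i (otherWire i n k) n ms := rfl
  have hND1 : (tailList i k n ++ n :: visitTail i (otherWire i n k) n ms).Nodup :=
    hVeq ▸ hnd
  have hND2 : (n :: visitTail i (otherWire i n k) n ms).Nodup :=
    hND1.sublist (List.sublist_append_right _ _)
  by_cases hc1 : n ≤ L ∧ dOf k = d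
  · rw [if_pos hc1]
    have hzero : strad i L d dOf (otherWire i n k) n ms = 0 := by
      by_contra hcon
      obtain ⟨lo, hi, hl1, hl2, hl3, hl4, hl5, hl6⟩ :=
        E.strad_witness (rs := k) hk1 (by omega) hc1.2 hob.1 hob.2 hv
          (nodeOnWire_otherWire i n k) ht (by omega)
      have hr2ne : otherWire i n k ≠ k := otherWire_ne hon
      have hloV : lo ∈ visitTail i (otherWire i n k) n ms := by
        rcases hl5 with ⟨_, hbad⟩ | h
        · exact absurd hbad hr2ne
        · exact h
      have hdisj := (List.nodup_append.1 hND1).2.2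
      rcases lt_trichotomy n lo with hcmp | hcmp | hcmp
      · have : lo ∈ tailList i k n := mem_tailList.2 ⟨hl3, hl4, hcmp⟩
        exact hdisj _ this _ (List.mem_cons.2 (Or.inr hloV)) rfl
      · exact (List.nodup_cons.1 hND2).1 (hcmp ▸ hloV)
      · have : n ∈ visitTail i (otherWire i n k) n ms :=
          hl6 n hv hon hcmp (by omega)
        exact (List.nodup_cons.1 hND2).1 this
    omega
  · rw [if_neg hc1]
    have := E.strad_le_one (d := d) hob.1 hob.2 hv (nodeOnWire_otherWire i n k) ht hND2
    omega

lemma nodup_fwd {k : ℕ} {ms : List ℕ} (h : IsGPPath m i k ms) :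
    (visitList w' (k + c) (ms.map (phim L (m + 1)))).Nodup := by
  obtain ⟨hk1, hk2, hmain, hnd⟩ := h
  cases ms with
  | nil => exact hmain.elim
  | cons n ms =>
      obtain ⟨hv, hon, htail, ht⟩ := hmain
      have hob := otherWire_bdd E.hlet hv k
      have ht' := E.travel_fwd hk1 hk2 hob.1 hob.2 hv ht
      rw [List.nodup_iff_count_le_one]
      intro x
      by_cases hx : x ∈ visitList w' (k + c) ((n :: ms).map (phim L (m + 1)))
      · have hvx : ValidNode w' x := by
          simp only [List.map_cons, visitList] at hx
          rw [List.mem_append, List.mem_cons] at hx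
          rcases hx with hx | rfl | hx
          · exact (mem_tailList.1 hx).1
          · exact E.valid_phim.2 hv
          · rw [E.hOther n k hv] at hx
            exact visitTail_valid ht' x hx
        rcases E.valid_classify hvx with ⟨j, hj, rfl⟩ | ⟨d, hd1, hd2, rfl⟩
        · rw [E.count_visitList_phi hk1 hk2 hv ht j]
          exact List.nodup_iff_count_le_one.1 hnd j
        · rw [E.count_visitList_block hk1 hk2 hv ht hd1 hd2]
          exact E.visitList_block_le_one hk1 hk2 hv hon ht hnd
      · rw [List.count_eq_zero_of_not_mem hx]
        omega

lemma nodup_bwd {k n : ℕ} {ms : List ℕ} (hk1 : 1 ≤ k) (hk2 : k ≤ m)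
    (hv : ValidNode i n) (ht : TravelOK i k (otherWire i n k) n ms)
    (hnd' : (visitList w' (k + c) ((n :: ms).map (phim L (m + 1)))).Nodup) :
    (visitList i k (n :: ms)).Nodup := by
  rw [List.nodup_iff_count_le_one]
  intro x
  rw [← E.count_visitList_phi hk1 hk2 hv ht x]
  exact List.nodup_iff_count_le_one.1 hnd' _

lemma gp_fwd {k : ℕ} {ms : List ℕ} (h : IsGPPath m i k ms) :
    IsGPPath (m + 1) w' (k + c) (ms.map (phim L (m + 1))) := by
  have hnd' := E.nodup_fwd h
  obtain ⟨hk1, hk2, hmain, hnd⟩ := h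
  have hc1 := E.hc
  cases ms with
  | nil => exact hmain.elim
  | cons n ms =>
      obtain ⟨hv, hon, htail, ht⟩ := hmain
      have hob := otherWire_bdd E.hlet hv k
      refine ⟨by omega, by omega, ⟨E.valid_phim.2 hv, (E.hNode n k hv).2 hon, ?_, ?_⟩, hnd'⟩
      · exact (E.tail_forb hk1 hk2 hk1 (by omega)).2 htail
      · rw [E.hOther n k hv]
        exact E.travel_fwd hk1 hk2 hob.1 hob.2 hv ht

lemma gp_bwd {k n : ℕ} {ms : List ℕ} (hk1 : 1 ≤ k) (hk2 : k ≤ m)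
    (h : IsGPPath (m + 1) w' (k + c) ((n :: ms).map (phim L (m + 1)))) :
    IsGPPath m i k (n :: ms) := by
  obtain ⟨_, _, hmain, hnd⟩ := h
  obtain ⟨hv', hon', htail', ht'⟩ := hmain
  have hv : ValidNode i n := E.valid_phim.1 hv'
  have hob := otherWire_bdd E.hlet hv k
  rw [E.hOther n k hv] at ht'
  have ht := E.travel_bwd hk1 hk2 hob.1 hob.2 hv ht'
  exact ⟨hk1, hk2, ⟨hv, (E.hNode n k hv).1 hon',
    (E.tail_forb hk1 hk2 hk1 (by omega)).1 htail', ht⟩,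
    E.nodup_bwd hk1 hk2 hv ht hnd⟩

theorem main_transfer :
    ∃ Ψ : {p // p ∈ GP m i} → {q // q ∈ GP (m + 1) w'},
      Function.Injective Ψ ∧
      Set.range (fun p => (Ψ p).1) =
        {q | q ∈ GP (m + 1) w' ∧ ∀ t ∈ q.2, ¬ NodeOnWire w' t ω} := by
  refine ⟨fun p => ⟨(p.1.1 + c, p.1.2.map (phim L (m + 1))), E.gp_fwd p.2⟩, ?_, ?_⟩
  · intro p q h
    simp only [Subtype.mk.injEq, Prod.mk.injEq] at h
    replace h : p.1.1 + c = q.1.1 + c ∧ p.1.2.map (phim L (m + 1)) = q.1.2.map (phim L (m + 1)) :=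
      Prod.mk.inj (congrArg Subtype.val h)
    apply Subtype.ext
    apply Prod.ext
    · omega
    · exact List.map_injective_iff.2 (fun x y hh => phim_inj hh) h.2
  · ext q
    simp only [Set.mem_range, Set.mem_setOf_eq]
    constructor
    · rintro ⟨p, rfl⟩
      refine ⟨E.gp_fwd p.2, ?_⟩
      intro t ht
      simp only [List.mem_map] at ht
      obtain ⟨j, hj, rfl⟩ := ht
      exact E.hwnot j (gp_ms_valid p.2 j hj)
    · rintro ⟨hq, hav⟩
      obtain ⟨k, hk1, hk2, hkeq⟩ := E.hrange q.1 q.2 hq hav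
      have hback : ∀ t ∈ q.2, phim L (m + 1) (if t ≤ L then t else t - (m + 1)) = t ∧
          ValidNode i (if t ≤ L then t else t - (m + 1)) := by
        intro t ht
        have hvt : ValidNode w' t := gp_ms_valid hq t ht
        rcases E.valid_classify hvt with ⟨j, hj, rfl⟩ | ⟨d, hd1, hd2, rfl⟩
        · have hLl := E.hL
          have hj1 := hj.1
          have hj2 := hj.2
          constructor
          · unfold phim
            split_ifs <;> omega
          · unfold phim ValidNode
            split_ifs <;> constructor <;> omega
        · exact absurd (E.hBlockw d hd1 hd2) (hav _ ht)
      have hmap : (q.2.map (fun t => if t ≤ L then t else t - (m + 1))).map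
          (phim L (m + 1)) = q.2 := by
        rw [List.map_map]
        calc q.2.map (phim L (m + 1) ∘ fun t => if t ≤ L then t else t - (m + 1))
            = q.2.map id := List.map_congr_left (fun t ht => (hback t ht).1)
          _ = q.2 := List.map_id _
      rcases hms : q.2 with _ | ⟨t, ts⟩
      · obtain ⟨_, _, hmain, _⟩ := hq
        rw [hms] at hmain
        exact hmain.elim
      · have hmap' : ((if t ≤ L then t else t - (m + 1)) ::
            ts.map (fun t => if t ≤ L then t else t - (m + 1))).map (phim L (m + 1)) =
            q.2 := by
          rw [← hmap, hms]
          simp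
        have hq' : IsGPPath (m + 1) w' (k + c)
            (((if t ≤ L then t else t - (m + 1)) ::
              ts.map (fun t => if t ≤ L then t else t - (m + 1))).map (phim L (m + 1))) := by
          rw [hmap', ← hkeq]
          exact hq
        refine ⟨⟨(k, (if t ≤ L then t else t - (m + 1)) ::
            ts.map (fun t => if t ≤ L then t else t - (m + 1))),
            E.gp_bwd hk1 hk2 hq'⟩, ?_⟩
        simp only
        apply Prod.ext
        · exact hkeq.symm
        · exact hmap'

end ExtData

section ExtDInst

variable {m s : ℕ} {i : List ℕ}

lemma symm_bdd {w : List ℕ} (hlet : ∀ a ∈ w, 1 ≤ a ∧ a ≤ m) {r : ℕ}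
    (hr1 : 1 ≤ r) (hr2 : r ≤ m + 1) :
    1 ≤ (wordProd w).symm r ∧ (wordProd w).symm r ≤ m + 1 := by
  set x := (wordProd w).symm r with hx
  have hpx : wordProd w x = r := Equiv.apply_symm_apply _ _
  by_contra hcon
  have hfix : wordProd w x = x := wordProd_fix hlet (by omega)
  omega

lemma extD_length (hsl : s ≤ i.length) : (extD m s i).length = i.length + (m + 1) := by
  simp [extD, descWord_length]
  omega

lemma take_len (hsl : s ≤ i.length) : (i.take (i.length - s)).length = i.length - s := by
  rw [List.length_take]; omega

lemma extD_take_low (hsl : s ≤ i.length) {t : ℕ} (ht : t ≤ i.length - s) :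
    (extD m s i).take t = i.take t := by
  unfold extD
  rw [List.append_assoc, List.take_append_of_le_length (by rw [take_len hsl]; omega),
    List.take_take]
  congr 1
  omega

lemma extD_take_block (hsl : s ≤ i.length) {e : ℕ} (he : e ≤ m + 1) :
    (extD m s i).take (i.length - s + e) =
      i.take (i.length - s) ++ (descWord (m + 1)).take e := by
  unfold extD
  rw [List.append_assoc, List.take_append]
  have h1 := take_len hsl
  rw [h1]
  congr 1
  · rw [List.take_take]
    congr 1
    omega
  · have h2 : i.length - s + e - (i.length - s) = e := by omega
    rw [h2, List.take_append_of_le_length (by rw [descWord_length]; omega)]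

lemma extD_take_high (hsl : s ≤ i.length) {t : ℕ} (ht1 : i.length - s ≤ t)
    (ht2 : t ≤ i.length) :
    (extD m s i).take (t + (m + 1)) =
      i.take (i.length - s) ++ descWord (m + 1) ++
        ((i.drop (i.length - s)).take (t - (i.length - s))).map (· + 1) := by
  unfold extD
  rw [List.take_append]
  have h1 : (i.take (i.length - s) ++ descWord (m + 1)).length = i.length - s + (m + 1) := by
    rw [List.length_append, take_len hsl, descWord_length]
  rw [h1, List.take_of_length_le (by rw [h1]; omega)]
  congr 1
  rw [← List.map_take]
  congr 2
  omega

lemma extD_letter_low (hsl : s ≤ i.length) {j : ℕ} (hj1 : 1 ≤ j) (hj2 : j ≤ i.length - s) :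
    letterAt (extD m s i) j = letterAt i j := by
  unfold letterAt extD
  rw [List.append_assoc, List.getD_append _ _ _ _ (by rw [take_len hsl]; omega)]
  rw [List.getD_eq_getElem _ _ (by rw [take_len hsl]; omega),
    List.getD_eq_getElem _ _ (by omega : j - 1 < i.length)]
  simp

lemma extD_letter_block (hsl : s ≤ i.length) {d : ℕ} (hd1 : 1 ≤ d) (hd2 : d ≤ m + 1) :
    letterAt (extD m s i) (i.length - s + d) = m + 2 - d := by
  unfold letterAt extD
  have h1 := take_len hsl
  rw [List.append_assoc, List.getD_append_right _ _ _ _ (by rw [h1]; omega), h1]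
  have h2 : i.length - s + d - 1 - (i.length - s) = d - 1 := by omega
  rw [h2, List.getD_append _ _ _ _ (by rw [descWord_length]; omega), descWord_getD (by omega)]
  omega

lemma extD_letter_high (hsl : s ≤ i.length) {j : ℕ} (hj1 : i.length - s < j)
    (hj2 : j ≤ i.length) :
    letterAt (extD m s i) (j + (m + 1)) = letterAt i j + 1 := by
  unfold letterAt extD
  have h1 : (i.take (i.length - s) ++ descWord (m + 1)).length = i.length - s + (m + 1) := by
    rw [List.length_append, take_len hsl, descWord_length]
  rw [List.getD_append_right _ _ _ _ (by rw [h1]; omega)]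
  rw [h1]
  have h2 : j + (m + 1) - 1 - (i.length - s + (m + 1)) = j - 1 - (i.length - s) := by omega
  rw [h2]
  have h3 : j - 1 - (i.length - s) < (i.drop (i.length - s)).length := by
    rw [List.length_drop]; omega
  rw [List.getD_eq_getElem _ _ (by simpa using h3), List.getD_eq_getElem _ _ (by omega : j - 1 < i.length)]
  simp only [List.getElem_map, List.getElem_drop]
  have h4 : i.length - s + (j - 1 - (i.length - s)) = j - 1 := by omega
  simp only [h4]

lemma extD_state_low (hsl : s ≤ i.length) {j : ℕ} (hj : j ≤ i.length - s + 1) :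
    stateAbove (extD m s i) j = stateAbove i j := by
  unfold stateAbove
  rw [extD_take_low hsl (by omega)]

lemma extD_state_block (hsl : s ≤ i.length) {d : ℕ} (hd1 : 1 ≤ d) (hd2 : d ≤ m + 2) :
    stateAbove (extD m s i) (i.length - s + d) =
      wordProd (i.take (i.length - s)) * wordProd ((descWord (m + 1)).take (d - 1)) := by
  unfold stateAbove
  have h1 : i.length - s + d - 1 = i.length - s + (d - 1) := by omega
  rw [h1, extD_take_block hsl (by omega), wordProd_append]

lemma extD_state_high (hlet : ∀ a ∈ i, 1 ≤ a ∧ a ≤ m) (hsl : s ≤ i.length) {j : ℕ}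
    (hj1 : i.length - s + 1 ≤ j) (hj2 : j ≤ i.length + 1) :
    stateAbove (extD m s i) (j + (m + 1)) =
      stateAbove i j * wordProd (descWord (m + 1)) := by
  unfold stateAbove
  have h1 : j + (m + 1) - 1 = (j - 1) + (m + 1) := by omega
  rw [h1, extD_take_high hsl (by omega) (by omega), wordProd_append, wordProd_append]
  have hu : ∀ a ∈ (i.drop (i.length - s)).take (j - 1 - (i.length - s)), 1 ≤ a ∧ a ≤ m :=
    fun a ha => hlet a (List.mem_of_mem_drop (List.mem_of_mem_take ha))
  rw [mul_assoc, ← conj_desc hu, ← mul_assoc, ← wordProd_append, ← List.take_add]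
  have h5 : i.length - s + (j - 1 - (i.length - s)) = j - 1 := by omega
  rw [h5]

lemma extD_wire_phim (hlet : ∀ a ∈ i, 1 ≤ a ∧ a ≤ m) (hsl : s ≤ i.length) {j : ℕ}
    (hj : ValidNode i j) :
    wireX (extD m s i) (phim (i.length - s) (m + 1) j) = wireX i j ∧
      wireY (extD m s i) (phim (i.length - s) (m + 1) j) = wireY i j := by
  have hl := letterAt_bdd hlet hj
  obtain ⟨hj1, hj2⟩ := hj
  unfold phim
  split_ifs with hc
  · unfold wireX wireY
    rw [extD_letter_low hsl hj1 hc, extD_state_low hsl (by omega)]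
    exact ⟨rfl, rfl⟩
  · unfold wireX wireY
    rw [extD_letter_high hsl (by omega) hj2,
      extD_state_high hlet hsl (by omega) (by omega)]
    simp only [Equiv.Perm.mul_apply]
    constructor
    · congr 1
      rw [wordProd_desc]
      split_ifs <;> omega
    · congr 1
      rw [wordProd_desc]
      split_ifs <;> omega

lemma extD_wire_block (hlet : ∀ a ∈ i, 1 ≤ a ∧ a ≤ m) (hsl : s ≤ i.length) {d : ℕ}
    (hd1 : 1 ≤ d) (hd2 : d ≤ m + 1) :
    wireX (extD m s i) (i.length - s + d) = wordProd (i.take (i.length - s)) (m + 2 - d) ∧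
      wireY (extD m s i) (i.length - s + d) = m + 2 := by
  have hlt : ∀ a ∈ i.take (i.length - s), 1 ≤ a ∧ a ≤ m :=
    fun a ha => hlet a (List.mem_of_mem_take ha)
  unfold wireX wireY
  rw [extD_letter_block hsl hd1 hd2, extD_state_block hsl (by omega) (by omega)]
  simp only [Equiv.Perm.mul_apply]
  constructor
  · congr 1
    rw [wordProd_descTake (by omega)]
    split_ifs <;> omega
  · have h1 : wordProd ((descWord (m + 1)).take (d - 1)) (m + 2 - d + 1) = m + 2 := by
      rw [wordProd_descTake (by omega)]
      split_ifs <;> omega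
    rw [h1]
    exact wordProd_fix hlt (by omega)

end ExtDInst

lemma extD_data (hm : 1 ≤ m) (hlet : ∀ a ∈ i, 1 ≤ a ∧ a ≤ m) (hsl : s ≤ i.length) :
    ExtData m 0 (m + 2) (i.length - s) i (extD m s i)
      (fun r => m + 2 - (wordProd (i.take (i.length - s))).symm r) := by
  have hlt : ∀ a ∈ i.take (i.length - s), 1 ≤ a ∧ a ≤ m :=
    fun a ha => hlet a (List.mem_of_mem_take ha)
  constructor
  · exact hm
  · omega
  · exact hlet
  · exact extD_length hsl
  · omega
  · -- hNode
    intro j r hj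
    obtain ⟨hX, hY⟩ := extD_wire_phim hlet hsl hj
    unfold NodeOnWire
    simp only [Nat.add_zero]
    rw [hX, hY]
  · -- hOther
    intro j r hj
    obtain ⟨hX, hY⟩ := extD_wire_phim hlet hsl hj
    simp only [Nat.add_zero]
    unfold otherWire
    rw [hX, hY]
  · -- hwnot
    intro j hj hcon
    obtain ⟨hX, hY⟩ := extD_wire_phim hlet hsl hj
    have hbX := wireX_bdd hlet hj
    have hbY := wireY_bdd hlet hj
    rcases hcon with h | h
    · rw [hX] at h; omega
    · rw [hY] at h; omega
  · -- hdOf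
    intro r hr1 hr2
    have := symm_bdd hlt hr1 hr2
    omega
  · -- hdOfInj
    intro r r' hr1 hr2 hr1' hr2' heq
    have h1 := symm_bdd hlt hr1 hr2
    have h2 := symm_bdd hlt hr1' hr2'
    have h3 : (wordProd (i.take (i.length - s))).symm r =
        (wordProd (i.take (i.length - s))).symm r' := by omega
    have h4 := congrArg (wordProd (i.take (i.length - s))) h3
    rwa [Equiv.apply_symm_apply, Equiv.apply_symm_apply] at h4
  · -- hBlockOn
    intro d r hd1 hd2 hr1 hr2
    obtain ⟨hX, hY⟩ := extD_wire_block (s := s) hlet hsl hd1 hd2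
    have hsb := symm_bdd hlt hr1 hr2
    unfold NodeOnWire
    simp only [Nat.add_zero]
    rw [hX, hY]
    constructor
    · rintro (h | h)
      · have := congrArg (wordProd (i.take (i.length - s))).symm h
        rw [Equiv.symm_apply_apply] at this
        omega
      · omega
    · intro h
      left
      have h5 : m + 2 - d = (wordProd (i.take (i.length - s))).symm r := by omega
      rw [h5, Equiv.apply_symm_apply]
  · -- hBlockw
    intro d hd1 hd2
    obtain ⟨hX, hY⟩ := extD_wire_block (s := s) hlet hsl hd1 hd2
    exact Or.inr hY
  · -- hBlockFree
    intro d k r hd1 hd2 hk1 hk2 hr1 hr2 hon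
    obtain ⟨hX, hY⟩ := extD_wire_block (s := s) hlet hsl hd1 hd2
    simp only [Nat.add_zero] at hon ⊢
    have hXr : wireX (extD m s i) (i.length - s + d) = r := by
      rcases hon with h | h
      · exact h
      · omega
    intro hcon
    unfold Forbidden at hcon
    rw [otherWire, if_pos hXr, hY] at hcon
    omega
  · -- hrange
    intro k' ms' hgp havoid
    obtain ⟨hk1, hk2, hmain, _⟩ := hgp
    refine ⟨k', hk1, ?_, by omega⟩
    by_contra hcon
    have hk'm : k' + 1 = m + 2 := by omega
    cases ms' with
    | nil => exact hmain.elim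
    | cons n rest =>
        obtain ⟨hv, hon, _, ht⟩ := hmain
        rcases travel_last ht with heq | ⟨t, htm, hton⟩
        · have hno := nodeOnWire_otherWire (extD m s i) n k'
          rw [heq, hk'm] at hno
          exact havoid n (by simp) hno
        · rw [hk'm] at hton
          exact havoid t (by simp [htm]) hton

section ExtAInst

variable {m s : ℕ} {i : List ℕ}

lemma asc_mul_desc (m : ℕ) :
    wordProd (ascWord (m + 1)) * wordProd (descWord (m + 1)) = 1 := by
  ext c
  simp only [Equiv.Perm.mul_apply, Equiv.Perm.one_apply]
  rw [wordProd_desc, wordProd_asc]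
  split_ifs <;> omega

lemma conj_asc {u : List ℕ} (hu : ∀ a ∈ u, 1 ≤ a ∧ a ≤ m) :
    wordProd (u.map (· + 1)) =
      wordProd (ascWord (m + 1)) * wordProd u * wordProd (descWord (m + 1)) := by
  have h := conj_desc hu
  calc wordProd (u.map (· + 1))
      = (wordProd (ascWord (m + 1)) * wordProd (descWord (m + 1))) *
          wordProd (u.map (· + 1)) := by rw [asc_mul_desc]; simp
    _ = wordProd (ascWord (m + 1)) *
          (wordProd (descWord (m + 1)) * wordProd (u.map (· + 1))) := by rw [mul_assoc]
    _ = wordProd (ascWord (m + 1)) * (wordProd u * wordProd (descWord (m + 1))) := by rw [h]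
    _ = _ := by rw [mul_assoc]

lemma extA_length (hsl : s ≤ i.length) : (extA m s i).length = i.length + (m + 1) := by
  simp [extA, ascWord_length]
  omega

lemma extA_take_low (hsl : s ≤ i.length) {t : ℕ} (ht : t ≤ i.length - s) :
    (extA m s i).take t = (i.take t).map (· + 1) := by
  unfold extA
  rw [List.append_assoc, List.take_append_of_le_length (by
    rw [List.length_map, take_len hsl]; omega), ← List.map_take, List.take_take]
  congr 2
  omega

lemma extA_take_block (hsl : s ≤ i.length) {e : ℕ} (he : e ≤ m + 1) :
    (extA m s i).take (i.length - s + e) =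
      (i.take (i.length - s)).map (· + 1) ++ (ascWord (m + 1)).take e := by
  unfold extA
  rw [List.append_assoc, List.take_append]
  have h1 : ((i.take (i.length - s)).map (· + 1)).length = i.length - s := by
    rw [List.length_map, take_len hsl]
  rw [h1, List.take_of_length_le (by rw [h1]; omega)]
  congr 1
  have h2 : i.length - s + e - (i.length - s) = e := by omega
  rw [h2, List.take_append_of_le_length (by rw [ascWord_length]; omega)]

lemma extA_take_high (hsl : s ≤ i.length) {t : ℕ} (ht1 : i.length - s ≤ t)
    (ht2 : t ≤ i.length) :
    (extA m s i).take (t + (m + 1)) =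
      (i.take (i.length - s)).map (· + 1) ++ ascWord (m + 1) ++
        (i.drop (i.length - s)).take (t - (i.length - s)) := by
  unfold extA
  rw [List.take_append]
  have h1 : ((i.take (i.length - s)).map (· + 1) ++ ascWord (m + 1)).length =
      i.length - s + (m + 1) := by
    rw [List.length_append, List.length_map, take_len hsl, ascWord_length]
  rw [h1, List.take_of_length_le (by rw [h1]; omega)]
  have h2 : t + (m + 1) - (i.length - s + (m + 1)) = t - (i.length - s) := by omega
  rw [h2]

lemma extA_letter_low (hsl : s ≤ i.length) {j : ℕ} (hj1 : 1 ≤ j) (hj2 : j ≤ i.length - s) :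
    letterAt (extA m s i) j = letterAt i j + 1 := by
  unfold letterAt extA
  rw [List.append_assoc, List.getD_append _ _ _ _ (by
    rw [List.length_map, take_len hsl]; omega)]
  rw [List.getD_eq_getElem _ _ (by rw [List.length_map, take_len hsl]; omega),
    List.getD_eq_getElem _ _ (by omega : j - 1 < i.length)]
  simp

lemma extA_letter_block (hsl : s ≤ i.length) {d : ℕ} (hd1 : 1 ≤ d) (hd2 : d ≤ m + 1) :
    letterAt (extA m s i) (i.length - s + d) = d := by
  unfold letterAt extA
  have h1 : ((i.take (i.length - s)).map (· + 1)).length = i.length - s := by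
    rw [List.length_map, take_len hsl]
  rw [List.append_assoc, List.getD_append_right _ _ _ _ (by rw [h1]; omega), h1]
  have h2 : i.length - s + d - 1 - (i.length - s) = d - 1 := by omega
  rw [h2, List.getD_append _ _ _ _ (by rw [ascWord_length]; omega), ascWord_getD (by omega)]
  omega

lemma extA_letter_high (hsl : s ≤ i.length) {j : ℕ} (hj1 : i.length - s < j)
    (hj2 : j ≤ i.length) :
    letterAt (extA m s i) (j + (m + 1)) = letterAt i j := by
  unfold letterAt extA
  have h1 : ((i.take (i.length - s)).map (· + 1) ++ ascWord (m + 1)).length =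
      i.length - s + (m + 1) := by
    rw [List.length_append, List.length_map, take_len hsl, ascWord_length]
  rw [List.getD_append_right _ _ _ _ (by rw [h1]; omega), h1]
  have h2 : j + (m + 1) - 1 - (i.length - s + (m + 1)) = j - 1 - (i.length - s) := by omega
  rw [h2]
  have h3 : j - 1 - (i.length - s) < (i.drop (i.length - s)).length := by
    rw [List.length_drop]; omega
  rw [List.getD_eq_getElem _ _ h3, List.getD_eq_getElem _ _ (by omega : j - 1 < i.length)]
  simp only [List.getElem_drop]
  have h4 : i.length - s + (j - 1 - (i.length - s)) = j - 1 := by omega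
  simp only [h4]

lemma extA_state_low (hlet : ∀ a ∈ i, 1 ≤ a ∧ a ≤ m) (hsl : s ≤ i.length) {j : ℕ}
    (hj : j ≤ i.length - s + 1) :
    stateAbove (extA m s i) j =
      wordProd (ascWord (m + 1)) * stateAbove i j * wordProd (descWord (m + 1)) := by
  unfold stateAbove
  rw [extA_take_low hsl (by omega), conj_asc (fun a ha => hlet a (List.mem_of_mem_take ha))]

lemma extA_state_block (hlet : ∀ a ∈ i, 1 ≤ a ∧ a ≤ m) (hsl : s ≤ i.length) {d : ℕ}
    (hd1 : 1 ≤ d) (hd2 : d ≤ m + 2) :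
    stateAbove (extA m s i) (i.length - s + d) =
      (wordProd (ascWord (m + 1)) * wordProd (i.take (i.length - s)) *
        wordProd (descWord (m + 1))) * wordProd ((ascWord (m + 1)).take (d - 1)) := by
  unfold stateAbove
  have h1 : i.length - s + d - 1 = i.length - s + (d - 1) := by omega
  rw [h1, extA_take_block hsl (by omega), wordProd_append,
    conj_asc (fun a ha => hlet a (List.mem_of_mem_take ha))]

lemma extA_state_high (hlet : ∀ a ∈ i, 1 ≤ a ∧ a ≤ m) (hsl : s ≤ i.length) {j : ℕ}
    (hj1 : i.length - s + 1 ≤ j) (hj2 : j ≤ i.length + 1) :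
    stateAbove (extA m s i) (j + (m + 1)) =
      wordProd (ascWord (m + 1)) * stateAbove i j := by
  unfold stateAbove
  have h1 : j + (m + 1) - 1 = (j - 1) + (m + 1) := by omega
  rw [h1, extA_take_high hsl (by omega) (by omega), wordProd_append, wordProd_append,
    conj_asc (fun a ha => hlet a (List.mem_of_mem_take ha))]
  rw [mul_assoc (wordProd (ascWord (m + 1)) * wordProd (i.take (i.length - s))),
    desc_mul_asc, mul_one, mul_assoc, ← wordProd_append, ← List.take_add]
  have h5 : i.length - s + (j - 1 - (i.length - s)) = j - 1 := by omega
  rw [h5]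

lemma extA_wire_phim (hlet : ∀ a ∈ i, 1 ≤ a ∧ a ≤ m) (hsl : s ≤ i.length) {j : ℕ}
    (hj : ValidNode i j) :
    wireX (extA m s i) (phim (i.length - s) (m + 1) j) = wireX i j + 1 ∧
      wireY (extA m s i) (phim (i.length - s) (m + 1) j) = wireY i j + 1 := by
  have hl := letterAt_bdd hlet hj
  have hbX := wireX_bdd hlet hj
  have hbY := wireY_bdd hlet hj
  obtain ⟨hj1, hj2⟩ := hj
  unfold phim
  split_ifs with hc
  · unfold wireX at hbX
    unfold wireY at hbY
    unfold wireX wireY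
    rw [extA_letter_low hsl hj1 hc, extA_state_low hlet hsl (by omega)]
    simp only [Equiv.Perm.mul_apply]
    have hd1 : wordProd (descWord (m + 1)) (letterAt i j + 1) = letterAt i j := by
      rw [wordProd_desc]; split_ifs <;> omega
    have hd2 : wordProd (descWord (m + 1)) (letterAt i j + 1 + 1) = letterAt i j + 1 := by
      rw [wordProd_desc]; split_ifs <;> omega
    rw [hd1, hd2]
    constructor
    · rw [wordProd_asc]; split_ifs <;> omega
    · rw [wordProd_asc]; split_ifs <;> omega
  · unfold wireX at hbX
    unfold wireY at hbY
    unfold wireX wireY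
    rw [extA_letter_high hsl (by omega) hj2, extA_state_high hlet hsl (by omega) (by omega)]
    simp only [Equiv.Perm.mul_apply]
    constructor
    · rw [wordProd_asc]; split_ifs <;> omega
    · rw [wordProd_asc]; split_ifs <;> omega

lemma extA_wire_block (hlet : ∀ a ∈ i, 1 ≤ a ∧ a ≤ m) (hsl : s ≤ i.length) {d : ℕ}
    (hd1 : 1 ≤ d) (hd2 : d ≤ m + 1) :
    wireX (extA m s i) (i.length - s + d) = 1 ∧
      wireY (extA m s i) (i.length - s + d) = wordProd (i.take (i.length - s)) d + 1 := by
  have hlt : ∀ a ∈ i.take (i.length - s), 1 ≤ a ∧ a ≤ m :=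
    fun a ha => hlet a (List.mem_of_mem_take ha)
  have hπd := wordProd_bdd hlt (c := d) (by omega) (by omega)
  unfold wireX wireY
  rw [extA_letter_block hsl hd1 hd2, extA_state_block hlet hsl (by omega) (by omega)]
  simp only [Equiv.Perm.mul_apply]
  constructor
  · have h1 : wordProd ((ascWord (m + 1)).take (d - 1)) d = 1 := by
      rw [wordProd_ascTake (by omega)]; split_ifs <;> omega
    have h2 : wordProd (descWord (m + 1)) 1 = m + 2 := by
      rw [wordProd_desc]; split_ifs <;> omega
    have h3 : wordProd (i.take (i.length - s)) (m + 2) = m + 2 :=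
      wordProd_fix hlt (by omega)
    have h4 : wordProd (ascWord (m + 1)) (m + 2) = 1 := by
      rw [wordProd_asc]; split_ifs <;> omega
    rw [h1, h2, h3, h4]
  · have h1 : wordProd ((ascWord (m + 1)).take (d - 1)) (d + 1) = d + 1 := by
      rw [wordProd_ascTake (by omega)]; split_ifs <;> omega
    have h2 : wordProd (descWord (m + 1)) (d + 1) = d := by
      rw [wordProd_desc]; split_ifs <;> omega
    rw [h1, h2]
    rw [wordProd_asc]
    split_ifs <;> omega

lemma extA_data (hm : 1 ≤ m) (hlet : ∀ a ∈ i, 1 ≤ a ∧ a ≤ m) (hsl : s ≤ i.length) :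
    ExtData m 1 1 (i.length - s) i (extA m s i)
      (fun r => (wordProd (i.take (i.length - s))).symm r) := by
  have hlt : ∀ a ∈ i.take (i.length - s), 1 ≤ a ∧ a ≤ m :=
    fun a ha => hlet a (List.mem_of_mem_take ha)
  constructor
  · exact hm
  · omega
  · exact hlet
  · exact extA_length hsl
  · omega
  · -- hNode
    intro j r hj
    obtain ⟨hX, hY⟩ := extA_wire_phim hlet hsl hj
    unfold NodeOnWire
    rw [hX, hY]
    omega
  · -- hOther
    intro j r hj
    obtain ⟨hX, hY⟩ := extA_wire_phim hlet hsl hj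
    unfold otherWire
    rw [hX, hY]
    split_ifs <;> omega
  · -- hwnot
    intro j hj hcon
    obtain ⟨hX, hY⟩ := extA_wire_phim hlet hsl hj
    have hbX := wireX_bdd hlet hj
    have hbY := wireY_bdd hlet hj
    rcases hcon with h | h
    · rw [hX] at h; omega
    · rw [hY] at h; omega
  · -- hdOf
    intro r hr1 hr2
    exact symm_bdd hlt hr1 hr2
  · -- hdOfInj
    intro r r' hr1 hr2 hr1' hr2' heq
    have h4 := congrArg (wordProd (i.take (i.length - s))) heq
    rwa [Equiv.apply_symm_apply, Equiv.apply_symm_apply] at h4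
  · -- hBlockOn
    intro d r hd1 hd2 hr1 hr2
    obtain ⟨hX, hY⟩ := extA_wire_block (s := s) hlet hsl hd1 hd2
    unfold NodeOnWire
    rw [hX, hY]
    constructor
    · rintro (h | h)
      · omega
      · have h5 : wordProd (i.take (i.length - s)) d = r := by omega
        have := congrArg (wordProd (i.take (i.length - s))).symm h5
        rwa [Equiv.symm_apply_apply] at this
    · intro h
      right
      have : wordProd (i.take (i.length - s)) d = r := by
        rw [h, Equiv.apply_symm_apply]
      omega
  · -- hBlockw
    intro d hd1 hd2
    obtain ⟨hX, hY⟩ := extA_wire_block (s := s) hlet hsl hd1 hd2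
    exact Or.inl hX
  · -- hBlockFree
    intro d k r hd1 hd2 hk1 hk2 hr1 hr2 hon
    obtain ⟨hX, hY⟩ := extA_wire_block (s := s) hlet hsl hd1 hd2
    intro hcon
    unfold Forbidden at hcon
    rw [otherWire, if_neg (by omega : ¬ wireX (extA m s i) (i.length - s + d) = r + 1),
      hX] at hcon
    omega
  · -- hrange
    intro k' ms' hgp havoid
    obtain ⟨hk1, hk2, hmain, _⟩ := hgp
    have hk2' : 2 ≤ k' := by
      by_contra hcon
      have hk'1 : k' = 1 := by omega
      cases ms' with
      | nil => exact hmain.elim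
      | cons n rest =>
          obtain ⟨hv, hon, _, ht⟩ := hmain
          rw [hk'1] at hon
          exact havoid n (by simp) hon
    exact ⟨k' - 1, by omega, by omega, by omega⟩

end ExtAInst

/-- Lemma: old paths under extension.
For `i ∈ Σ_{m+1}`, `• ∈ {A, D}` and `0 ≤ s ≤ m(m+1)/2` there is an injection
`Ψ_•(i,s) : GP(i) ↪ GP(E_•(s)(i))` whose image is exactly the set of rigorous paths
of `G(E_•(s)(i))` none of whose switching nodes lies on the wire `ℓ_•`, where
`ℓ_D` is the last wire `ℓ_{m+2}` and `ℓ_A = ℓ_1`. -/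
theorem statement8 (m : ℕ) (hm : 1 ≤ m) (i : List ℕ) (hi : IsReduced m i)
    (s : ℕ) (hs : s ≤ Dim m) :
    (∃ Ψ : {p // p ∈ GP m i} → {q // q ∈ GP (m + 1) (extD m s i)},
      Function.Injective Ψ ∧
      Set.range (fun p => (Ψ p).1) =
        {q | q ∈ GP (m + 1) (extD m s i) ∧
          ∀ t ∈ q.2, ¬ NodeOnWire (extD m s i) t (m + 2)}) ∧
    (∃ Ψ : {p // p ∈ GP m i} → {q // q ∈ GP (m + 1) (extA m s i)},
      Function.Injective Ψ ∧
      Set.range (fun p => (Ψ p).1) =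
        {q | q ∈ GP (m + 1) (extA m s i) ∧
          ∀ t ∈ q.2, ¬ NodeOnWire (extA m s i) t 1}) := by
  obtain ⟨hlen, hlet, _⟩ := hi
  have hsl : s ≤ i.length := by rw [hlen]; exact hs
  exact ⟨(extD_data hm hlet hsl).main_transfer, (extA_data hm hlet hsl).main_transfer⟩

end StringPolytope
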